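/- arXiv:1209.4691 — 6 statements merged into one kernel-verified Lean document; each statement's English description precedes it below -/
import Mathlib

section
/- Let ω be an infinite word over a finite integer alphabet. Then ω has bounded additive complexity if and only if the slope slope(ω) exists and there is a natural number M such that for every nonempty factor B of ω one has |slope(B) − slope(ω)| ≤ M/|B|. -/
/-- `B` is a factor of the infinite word `ω`. -/
def Factor (ω : ℕ → ℤ) (B : List ℤ) : Prop :=
  ∃ m : ℕ, B = (List.range B.length).map (fun i => ω (m + i))

/-- `ω` has bounded additive complexity: there is `M` such that for every `n ≥ 1`
the set of sums of factors of length `n` has at most `M` elements. -/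
def BoundedAddComplexity (ω : ℕ → ℤ) : Prop :=
  ∃ M : ℕ, ∀ n : ℕ, 1 ≤ n →
    ∃ T : Finset ℤ, T.card ≤ M ∧
      ∀ B : List ℤ, Factor ω B → B.length = n → B.sum ∈ T

/-- The slope of a finite word. -/
def wordSlope (B : List ℤ) : ℚ := (B.sum : ℚ) / (B.length : ℚ)

/-- `ω` has slope `L`. -/
def HasSlope (ω : ℕ → ℤ) (L : ℝ) : Prop :=
  Filter.Tendsto (fun n : ℕ => (∑ i ∈ Finset.range n, (ω i : ℝ)) / n)
    Filter.atTop (nhds L)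

namespace S0

def tseg (ω : ℕ → ℤ) (m n : ℕ) : ℤ := ∑ i ∈ Finset.range n, ω (m + i)

lemma list_sum_eq (f : ℕ → ℤ) (n : ℕ) :
    ((List.range n).map f).sum = ∑ i ∈ Finset.range n, f i := by
  induction n with
  | zero => simp
  | succ n ih =>
    rw [List.range_succ, Finset.sum_range_succ, List.map_append, List.sum_append, ih]
    simp

lemma tseg_succ (ω : ℕ → ℤ) (m n : ℕ) :
    tseg ω m (n + 1) = tseg ω m n + ω (m + n) :=
  Finset.sum_range_succ _ _

lemma tseg_add (ω : ℕ → ℤ) (m a b : ℕ) :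
    tseg ω m (a + b) = tseg ω m a + tseg ω (m + a) b := by
  induction b with
  | zero => simp [tseg]
  | succ b ih =>
    rw [show a + (b + 1) = (a + b) + 1 by omega, tseg_succ, ih, tseg_succ,
      show m + (a + b) = m + a + b by omega]
    ring

lemma crossing (a : ℕ → ℤ) (c : ℤ) :
    ∀ q p, p ≤ q → a p ≤ c → c < a q → ∃ i, a i ≤ c ∧ c < a (i + 1) := by
  intro q
  induction q with
  | zero =>
    intro p hpq hp hq
    interval_cases p
    omega
  | succ q ih =>
    intro p hpq hp hq
    by_cases h : a q ≤ c
    · exact ⟨q, h, hq⟩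
    · push_neg at h
      have hpq' : p ≤ q := by
        by_contra hc
        have : p = q + 1 := by omega
        subst this
        omega
      exact ih p hpq' hp h

lemma next_up (a : ℕ → ℤ) (d : ℤ) (hstep : ∀ m, |a (m + 1) - a m| ≤ d)
    (u : ℤ) (r p : ℕ) (hr : a r = u) (hp : u < a p) :
    ∃ w, (∃ m, a m = w) ∧ u < w ∧ w ≤ u + d := by
  rcases le_total r p with h | h
  · obtain ⟨i, h1, h2⟩ := crossing a u p r h (le_of_eq hr) hp
    have := abs_le.mp (hstep i)
    exact ⟨a (i + 1), ⟨i + 1, rfl⟩, h2, by omega⟩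
  · obtain ⟨i, h1, h2⟩ := crossing (fun j => -a j) (-u - 1) r p h
      (show -a p ≤ -u - 1 by omega) (show -u - 1 < -a r by omega)
    have h1' : -a i ≤ -u - 1 := h1
    have h2' : -u - 1 < -a (i + 1) := h2
    have := abs_le.mp (hstep i)
    exact ⟨a i, ⟨i, rfl⟩, by omega, by omega⟩

lemma climb (a : ℕ → ℤ) (d : ℤ) (hd : 0 ≤ d) (hstep : ∀ m, |a (m + 1) - a m| ≤ d)
    (V : Finset ℤ) (hmem : ∀ m, a m ∈ V) (p : ℕ) :
    ∀ k : ℕ, ∀ u : ℤ, (∃ r, a r = u) → (V.filter (fun x => u < x)).card ≤ k →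
      a p - u ≤ d * k := by
  intro k
  induction k with
  | zero =>
    intro u hu hcard
    by_contra hlt
    push_neg at hlt
    have hm : a p ∈ V.filter (fun x => u < x) :=
      Finset.mem_filter.mpr ⟨hmem p, by push_cast at hlt; omega⟩
    have := Finset.card_pos.mpr ⟨a p, hm⟩
    omega
  | succ k ih =>
    intro u hu hcard
    by_cases hup : u < a p
    · obtain ⟨r, hr⟩ := hu
      obtain ⟨w, hw, huw, hwd⟩ := next_up a d hstep u r p hr hup
      have hwV : w ∈ V := by obtain ⟨m, hm⟩ := hw; exact hm ▸ hmem m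
      have hwmem : w ∈ V.filter (fun x => u < x) := Finset.mem_filter.mpr ⟨hwV, huw⟩
      have hsub : V.filter (fun x => w < x) ⊆ (V.filter (fun x => u < x)).erase w := by
        intro x hx
        rw [Finset.mem_filter] at hx
        rw [Finset.mem_erase, Finset.mem_filter]
        exact ⟨by omega, hx.1, by omega⟩
      have hcard' : (V.filter (fun x => w < x)).card ≤ k := by
        have h1 := Finset.card_le_card hsub
        have h2 := Finset.card_erase_of_mem hwmem
        omega
      have := ih w hw hcard'
      push_cast
      nlinarith
    · push_neg at hup
      have : 0 ≤ d * (k + 1 : ℕ) := by positivity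
      omega

lemma chain_span (a : ℕ → ℤ) (d : ℤ) (hd : 0 ≤ d) (hstep : ∀ m, |a (m + 1) - a m| ≤ d)
    (V : Finset ℤ) (hmem : ∀ m, a m ∈ V) (p q : ℕ) :
    a p - a q ≤ d * V.card :=
  climb a d hd hstep V hmem p V.card (a q) ⟨q, rfl⟩
    (Finset.card_le_card (Finset.filter_subset _ _))

lemma tseg_mem_factor (ω : ℕ → ℤ) (m n : ℕ) :
    Factor ω ((List.range n).map fun i => ω (m + i)) := by
  refine ⟨m, ?_⟩
  simp

lemma factor_sum {ω : ℕ → ℤ} {B : List ℤ} (h : Factor ω B) :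
    ∃ m, B.sum = tseg ω m B.length := by
  obtain ⟨m, hm⟩ := h
  refine ⟨m, ?_⟩
  conv_lhs => rw [hm]
  rw [list_sum_eq]
  rfl

lemma forward (ω : ℕ → ℤ) (hfin : (Set.range ω).Finite) (h : BoundedAddComplexity ω) :
    ∃ L : ℝ, HasSlope ω L ∧ ∃ M : ℕ, ∀ B : List ℤ, Factor ω B → B ≠ [] →
      |(wordSlope B : ℝ) - L| ≤ (M : ℝ) / (B.length : ℝ) := by
  classical
  obtain ⟨M, hM⟩ := h
  have hM1 : 1 ≤ M := by
    obtain ⟨T, hTc, hTm⟩ := hM 1 le_rfl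
    have h1 : [ω 0].sum ∈ T := hTm [ω 0] ⟨0, by simp [List.range_succ]⟩ (by simp)
    have := Finset.card_pos.mpr ⟨_, h1⟩
    omega
  -- bound on the alphabet
  obtain ⟨C, hC⟩ : ∃ C : ℤ, ∀ i, |ω i| ≤ C := by
    have hfin' : (Set.range fun i => |ω i|).Finite := by
      apply (hfin.image abs).subset
      rintro x ⟨i, rfl⟩
      exact ⟨ω i, ⟨i, rfl⟩, rfl⟩
    obtain ⟨C, hC⟩ := hfin'.bddAbove
    exact ⟨C, fun i => hC ⟨i, rfl⟩⟩
  have hC0 : 0 ≤ C := le_trans (abs_nonneg _) (hC 0)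
  have hex : ∀ n : ℕ, ∃ T : Finset ℤ, T.card ≤ M ∧ ∀ m, tseg ω m n ∈ T := by
    intro n
    rcases Nat.eq_zero_or_pos n with rfl | hn
    · exact ⟨{0}, by simpa using hM1, fun m => by simp [tseg]⟩
    · obtain ⟨T, hTc, hTm⟩ := hM n hn
      refine ⟨T, hTc, fun m => ?_⟩
      have := hTm _ (tseg_mem_factor ω m n) (by simp)
      rwa [list_sum_eq] at this
  choose T hTc hTm using hex
  set V : ℕ → Finset ℤ := fun n => (T n).filter (fun x => ∃ m, tseg ω m n = x) with hV
  have hVmem : ∀ n m, tseg ω m n ∈ V n := fun n m => Finset.mem_filter.mpr ⟨hTm n m, m, rfl⟩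
  have hVne : ∀ n, (V n).Nonempty := fun n => ⟨_, hVmem n 0⟩
  have hVex : ∀ n x, x ∈ V n → ∃ m, tseg ω m n = x := fun n x hx => (Finset.mem_filter.mp hx).2
  set g : ℕ → ℤ := fun n => (V n).min' (hVne n) with hg
  set f : ℕ → ℤ := fun n => (V n).max' (hVne n) with hf
  have hgle : ∀ n m, g n ≤ tseg ω m n := fun n m => Finset.min'_le _ _ (hVmem n m)
  have hlef : ∀ n m, tseg ω m n ≤ f n := fun n m => Finset.le_max' _ _ (hVmem n m)
  have hgex : ∀ n, ∃ p, tseg ω p n = g n := fun n => hVex n (g n) ((V n).min'_mem (hVne n))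
  have hfex : ∀ n, ∃ p, tseg ω p n = f n := fun n => hVex n (f n) ((V n).max'_mem (hVne n))
  have hstep : ∀ n m, |tseg ω (m + 1) n - tseg ω m n| ≤ 2 * C := by
    intro n m
    have h1 : tseg ω m (n + 1) = tseg ω m n + ω (m + n) := tseg_succ ω m n
    have h2 : tseg ω m (n + 1) = tseg ω m 1 + tseg ω (m + 1) n := by
      rw [show n + 1 = 1 + n by omega]; exact tseg_add ω m 1 n
    have h3 : tseg ω m 1 = ω m := by simp [tseg]
    have habs1 := abs_le.mp (hC m)
    have habs2 := abs_le.mp (hC (m + n))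
    rw [abs_le]
    omega
  have hKspan : ∀ n, f n - g n ≤ 2 * C * M := by
    intro n
    obtain ⟨p, hp⟩ := hfex n
    obtain ⟨q, hq⟩ := hgex n
    have hcard : (V n).card ≤ M :=
      le_trans (Finset.card_le_card (Finset.filter_subset _ _)) (hTc n)
    have h5 : tseg ω p n - tseg ω q n ≤ 2 * C * ((V n).card : ℤ) :=
      chain_span (fun m => tseg ω m n) (2 * C) (by omega) (hstep n) (V n) (hVmem n) p q
    rw [hp, hq] at h5
    have hcard' : ((V n).card : ℤ) ≤ (M : ℤ) := by exact_mod_cast hcard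
    nlinarith
  have hgsuper : ∀ a b, g a + g b ≤ g (a + b) := by
    intro a b
    obtain ⟨p, hp⟩ := hgex (a + b)
    have h1 := tseg_add ω p a b
    have h2 := hgle a p
    have h3 := hgle b (p + a)
    omega
  have hfsub : ∀ a b, f (a + b) ≤ f a + f b := by
    intro a b
    obtain ⟨p, hp⟩ := hfex (a + b)
    have h1 := tseg_add ω p a b
    have h2 := hlef a p
    have h3 := hlef b (p + a)
    omega
  have hg0 : g 0 = 0 := by
    obtain ⟨p, hp⟩ := hgex 0
    have h1 := hgle 0 0
    have h2 : tseg ω p 0 = 0 := by simp [tseg]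
    have h3 : tseg ω 0 0 = 0 := by simp [tseg]
    omega
  have hf0 : f 0 = 0 := by
    obtain ⟨p, hp⟩ := hfex 0
    have h1 := hlef 0 0
    have h2 : tseg ω p 0 = 0 := by simp [tseg]
    have h3 : tseg ω 0 0 = 0 := by simp [tseg]
    omega
  have hgit : ∀ k m : ℕ, (k : ℤ) * g m ≤ g (k * m) := by
    intro k m
    induction k with
    | zero => simp [hg0]
    | succ k ih =>
      have h1 := hgsuper (k * m) m
      have hkm : (k + 1) * m = k * m + m := by ring
      rw [hkm]
      push_cast
      nlinarith
  have hfit : ∀ k m : ℕ, f (k * m) ≤ (k : ℤ) * f m := by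
    intro k m
    induction k with
    | zero => simp [hf0]
    | succ k ih =>
      have h1 := hfsub (k * m) m
      have hkm : (k + 1) * m = k * m + m := by ring
      rw [hkm]
      push_cast
      nlinarith
  have hglef : ∀ n, g n ≤ f n := fun n => le_trans (hgle n 0) (hlef n 0)
  have key : ∀ m n : ℕ, (n : ℤ) * g m ≤ (m : ℤ) * f n := by
    intro m n
    have h1 := hgit n m
    have h2 := hfit m n
    have h3 := hglef (n * m)
    rw [show m * n = n * m by ring] at h2
    linarith
  -- the slope
  set Lset : Set ℝ := Set.range (fun m : ℕ => (g (m + 1) : ℝ) / ((m : ℝ) + 1)) with hLset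
  have hLne : Lset.Nonempty := ⟨_, 0, rfl⟩
  have hbdd : BddAbove Lset := by
    refine ⟨(f 1 : ℝ), ?_⟩
    rintro x ⟨m, rfl⟩
    have h1 : ((1 : ℕ) : ℤ) * g (m + 1) ≤ ((m + 1 : ℕ) : ℤ) * f 1 := key (m + 1) 1
    have h2 : (g (m + 1) : ℝ) ≤ ((m : ℝ) + 1) * (f 1 : ℝ) := by exact_mod_cast (by push_cast at h1 ⊢; linarith : (g (m+1) : ℤ) ≤ ((m : ℤ) + 1) * f 1)
    rw [div_le_iff₀ (by positivity)]
    linarith [mul_comm ((m : ℝ) + 1) (f 1 : ℝ)]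
  set L : ℝ := sSup Lset with hL
  have hLub : ∀ n : ℕ, (g (n + 1) : ℝ) ≤ ((n : ℝ) + 1) * L := by
    intro n
    have h1 : (g (n + 1) : ℝ) / ((n : ℝ) + 1) ≤ L := le_csSup hbdd ⟨n, rfl⟩
    rw [div_le_iff₀ (by positivity)] at h1
    linarith [mul_comm L ((n : ℝ) + 1)]
  have hLlb : ∀ n : ℕ, ((n : ℝ) + 1) * L ≤ (f (n + 1) : ℝ) := by
    intro n
    have h1 : L ≤ (f (n + 1) : ℝ) / ((n : ℝ) + 1) := by
      apply csSup_le hLne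
      rintro x ⟨m, rfl⟩
      rw [div_le_div_iff₀ (by positivity) (by positivity)]
      have h2 := key (m + 1) (n + 1)
      have : ((n : ℝ) + 1) * (g (m + 1) : ℝ) ≤ ((m : ℝ) + 1) * (f (n + 1) : ℝ) := by
        exact_mod_cast (by push_cast at h2 ⊢; linarith : ((n : ℤ) + 1) * g (m + 1) ≤ ((m : ℤ) + 1) * f (n + 1))
      linarith [mul_comm (g (m + 1) : ℝ) ((n : ℝ) + 1), mul_comm (f (n + 1) : ℝ) ((m : ℝ) + 1)]
    rw [le_div_iff₀ (by positivity)] at h1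
    linarith [mul_comm L ((n : ℝ) + 1)]
  set K : ℤ := 2 * C * M with hK
  have hK0 : 0 ≤ K := mul_nonneg (by omega) (by exact_mod_cast Nat.zero_le M)
  have hmain : ∀ n m : ℕ, |(tseg ω m (n + 1) : ℝ) - ((n : ℝ) + 1) * L| ≤ (K : ℝ) := by
    intro n m
    have c1 : (g (n + 1) : ℝ) ≤ (tseg ω m (n + 1) : ℝ) := by exact_mod_cast hgle (n + 1) m
    have c2 : (tseg ω m (n + 1) : ℝ) ≤ (f (n + 1) : ℝ) := by exact_mod_cast hlef (n + 1) m
    have c3 : (f (n + 1) : ℝ) - (g (n + 1) : ℝ) ≤ (K : ℝ) := by exact_mod_cast hKspan (n + 1)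
    have c4 := hLub n
    have c5 := hLlb n
    rw [abs_le]
    constructor <;> linarith
  have hslope : HasSlope ω L := by
    rw [HasSlope, ← tendsto_sub_nhds_zero_iff]
    apply squeeze_zero_norm' (a := fun n : ℕ => (K : ℝ) / n)
    · rw [Filter.eventually_atTop]
      refine ⟨1, fun n hn => ?_⟩
      obtain ⟨n', rfl⟩ : ∃ n', n = n' + 1 := ⟨n - 1, by omega⟩
      have h1 := hmain n' 0
      have hsum : (∑ i ∈ Finset.range (n' + 1), (ω i : ℝ)) = (tseg ω 0 (n' + 1) : ℝ) := by
        rw [tseg]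
        push_cast
        simp
      rw [Real.norm_eq_abs, hsum]
      have hpos : (0 : ℝ) < ((n' : ℝ) + 1) := by positivity
      have he : (tseg ω 0 (n' + 1) : ℝ) / ((n' + 1 : ℕ) : ℝ) - L
          = ((tseg ω 0 (n' + 1) : ℝ) - ((n' : ℝ) + 1) * L) / ((n' : ℝ) + 1) := by
        push_cast
        field_simp
      rw [he, abs_div, abs_of_pos hpos]
      have hcast : ((n' + 1 : ℕ) : ℝ) = (n' : ℝ) + 1 := by push_cast; ring
      rw [hcast]
      gcongr
    · exact tendsto_const_div_atTop_nhds_zero_nat _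
  refine ⟨L, hslope, K.toNat, ?_⟩
  intro B hB hBne
  obtain ⟨m, hm⟩ := factor_sum hB
  obtain ⟨n, hn⟩ : ∃ n, B.length = n + 1 := by
    cases B with
    | nil => exact absurd rfl hBne
    | cons a l => exact ⟨l.length, rfl⟩
  rw [hn] at hm
  have hws : ((wordSlope B : ℚ) : ℝ) = (B.sum : ℝ) / (B.length : ℝ) := by
    rw [wordSlope, Rat.cast_div, Rat.cast_intCast, Rat.cast_natCast]
  have h1 := hmain n m
  have hKt : ((K.toNat : ℕ) : ℝ) = (K : ℝ) := by
    exact_mod_cast congrArg (Int.cast : ℤ → ℝ) (Int.toNat_of_nonneg hK0)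
  rw [hws, hn, hm, hKt]
  have hpos : (0 : ℝ) < ((n : ℝ) + 1) := by positivity
  have he : (tseg ω m (n + 1) : ℝ) / ((n + 1 : ℕ) : ℝ) - L
      = ((tseg ω m (n + 1) : ℝ) - ((n : ℝ) + 1) * L) / ((n : ℝ) + 1) := by
    push_cast
    field_simp
  rw [he, abs_div, abs_of_pos hpos]
  have hcast : ((n + 1 : ℕ) : ℝ) = (n : ℝ) + 1 := by push_cast; ring
  rw [hcast]
  gcongr

lemma backward (ω : ℕ → ℤ)
    (h : ∃ L : ℝ, HasSlope ω L ∧ ∃ M : ℕ, ∀ B : List ℤ, Factor ω B → B ≠ [] →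
      |(wordSlope B : ℝ) - L| ≤ (M : ℝ) / (B.length : ℝ)) :
    BoundedAddComplexity ω := by
  obtain ⟨L, _, M, hb⟩ := h
  refine ⟨2 * M + 1, fun n hn => ?_⟩
  refine ⟨Finset.Icc ⌈(n : ℝ) * L - M⌉ ⌊(n : ℝ) * L + M⌋, ?_, ?_⟩
  · rw [Int.card_Icc]
    have hfl : ((⌊(n : ℝ) * L + M⌋ : ℤ) : ℝ) ≤ (n : ℝ) * L + M := Int.floor_le _
    have hcl : (n : ℝ) * L - M ≤ ((⌈(n : ℝ) * L - M⌉ : ℤ) : ℝ) := Int.le_ceil _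
    have hdiff : (⌊(n : ℝ) * L + M⌋ : ℤ) - ⌈(n : ℝ) * L - M⌉ ≤ 2 * M := by
      have : (((⌊(n : ℝ) * L + M⌋ : ℤ) - ⌈(n : ℝ) * L - M⌉ : ℤ) : ℝ) ≤ ((2 * M : ℤ) : ℝ) := by
        push_cast
        linarith
      exact_mod_cast this
    omega
  · intro B hB hlen
    have hne : B ≠ [] := by
      intro hnil
      rw [hnil] at hlen
      simp at hlen
      omega
    have hb' := hb B hB hne
    have hws : ((wordSlope B : ℚ) : ℝ) = (B.sum : ℝ) / ((B.length : ℕ) : ℝ) := by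
      rw [wordSlope, Rat.cast_div, Rat.cast_intCast, Rat.cast_natCast]
    rw [hws, hlen] at hb'
    have hpos : (0 : ℝ) < (n : ℝ) := by
      have : (1 : ℕ) ≤ n := hn
      exact_mod_cast Nat.lt_of_lt_of_le Nat.zero_lt_one this
    have he : (B.sum : ℝ) / (n : ℝ) - L = ((B.sum : ℝ) - (n : ℝ) * L) / (n : ℝ) := by
      field_simp
    rw [he, abs_div, abs_of_pos hpos, div_le_div_iff₀ hpos hpos] at hb'
    have habs : |(B.sum : ℝ) - (n : ℝ) * L| ≤ (M : ℝ) := by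
      have hne' : (n : ℝ) ≠ 0 := ne_of_gt hpos
      nlinarith [abs_nonneg ((B.sum : ℝ) - (n : ℝ) * L)]
    have hab := abs_le.mp habs
    rw [Finset.mem_Icc]
    constructor
    · rw [Int.ceil_le]
      linarith [hab.1]
    · rw [Int.le_floor]
      linarith [hab.2]

end S0

/-- An infinite word over a finite integer alphabet has bounded additive complexity
iff its slope exists and every nonempty factor's slope is within `M/|B|` of it. -/
theorem stmt0 (ω : ℕ → ℤ) (hfin : (Set.range ω).Finite) :
    BoundedAddComplexity ω ↔
      ∃ L : ℝ, HasSlope ω L ∧ ∃ M : ℕ, ∀ B : List ℤ, Factor ω B → B ≠ [] →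
        |(wordSlope B : ℝ) - L| ≤ (M : ℝ) / (B.length : ℝ) := by
  constructor
  · exact S0.forward ω hfin
  · exact S0.backward ω
end

section
/- Let ω be an infinite word over a finite integer alphabet and let M be a natural number such that for all n ≥ 1 and all factors B, B′ of ω of length n one has |ΣB − ΣB′| < M. Then for any two nonempty factors B and B′ of ω (of possibly different lengths), |slope(B) − slope(B′)| < M/|B| + M/|B′|. -/
lemma listSumRange (f : ℕ → ℤ) (n : ℕ) :
    ((List.range n).map f).sum = ∑ i ∈ Finset.range n, f i := by
  induction n with
  | zero => simp
  | succ n ih =>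
    rw [List.range_succ, List.map_append, List.sum_append, Finset.sum_range_succ, ih]; simp

/-- If sums of equal-length factors of ω differ by less than M, then slopes of any
two nonempty factors differ by less than M/|B| + M/|B'|. -/
theorem stmt1 (ω : ℕ → ℤ) (hfin : (Set.range ω).Finite) (M : ℕ)
    (hM : ∀ n : ℕ, 1 ≤ n → ∀ B B' : List ℤ, Factor ω B → B.length = n →
      Factor ω B' → B'.length = n → |B.sum - B'.sum| < (M : ℤ))
    (B B' : List ℤ) (hB : Factor ω B) (hB' : Factor ω B')
    (hBne : B ≠ []) (hB'ne : B' ≠ []) :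
    |wordSlope B - wordSlope B'| < (M : ℚ) / (B.length : ℚ) + (M : ℚ) / (B'.length : ℚ) := by
  set p := B.length with hpdef
  set q := B'.length with hqdef
  have hp : 1 ≤ p := List.length_pos_iff.mpr hBne
  have hq : 1 ≤ q := List.length_pos_iff.mpr hB'ne
  -- every length-p block sum is within M-1 of B.sum
  have block : ∀ m : ℕ, |(∑ i ∈ Finset.range p, ω (m + i)) - B.sum| ≤ (M : ℤ) - 1 := by
    intro m
    have hfac : Factor ω ((List.range p).map (fun i => ω (m + i))) := ⟨m, by simp⟩
    have := hM p hp _ B hfac (by simp) hB rfl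
    rw [listSumRange] at this
    omega
  have block' : ∀ m : ℕ, |(∑ i ∈ Finset.range q, ω (m + i)) - B'.sum| ≤ (M : ℤ) - 1 := by
    intro m
    have hfac : Factor ω ((List.range q).map (fun i => ω (m + i))) := ⟨m, by simp⟩
    have := hM q hq _ B' hfac (by simp) hB' rfl
    rw [listSumRange] at this
    omega
  -- key: sum of a length k*r prefix vs k * block sum
  have key : ∀ (r : ℕ) (S : ℤ), (∀ m : ℕ, |(∑ i ∈ Finset.range r, ω (m + i)) - S| ≤ (M : ℤ) - 1) →
      ∀ k : ℕ, |(∑ i ∈ Finset.range (k * r), ω i) - k * S| ≤ k * ((M : ℤ) - 1) := by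
    intro r S hS k
    induction k with
    | zero => simp
    | succ k ih =>
      have hsplit : ∑ i ∈ Finset.range ((k + 1) * r), ω i
          = (∑ i ∈ Finset.range (k * r), ω i) + ∑ i ∈ Finset.range r, ω (k * r + i) := by
        rw [show (k + 1) * r = k * r + r by ring, Finset.sum_range_add]
      have h2 := hS (k * r)
      rw [hsplit]
      push_cast
      calc |(∑ i ∈ Finset.range (k * r), ω i) + (∑ i ∈ Finset.range r, ω (k * r + i)) - ((k : ℤ) + 1) * S|
          = |((∑ i ∈ Finset.range (k * r), ω i) - k * S) + ((∑ i ∈ Finset.range r, ω (k * r + i)) - S)| := by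
            congr 1; ring
        _ ≤ |(∑ i ∈ Finset.range (k * r), ω i) - k * S| + |(∑ i ∈ Finset.range r, ω (k * r + i)) - S| :=
            abs_add_le _ _
        _ ≤ k * ((M : ℤ) - 1) + ((M : ℤ) - 1) := by
            have := ih
            push_cast at this
            exact add_le_add this h2
        _ = ((k : ℤ) + 1) * ((M : ℤ) - 1) := by ring
  have k1 := key p B.sum block q
  have k2 := key q B'.sum block' p
  rw [show q * p = p * q by ring] at k1
  -- combine
  have main : |(q : ℤ) * B.sum - (p : ℤ) * B'.sum| < ((q : ℤ) + p) * M := by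
    have h3 : |(q : ℤ) * B.sum - (p : ℤ) * B'.sum|
        ≤ |(∑ i ∈ Finset.range (p * q), ω i) - q * B.sum| + |(∑ i ∈ Finset.range (p * q), ω i) - p * B'.sum| := by
      calc |(q : ℤ) * B.sum - (p : ℤ) * B'.sum|
          = |((∑ i ∈ Finset.range (p * q), ω i) - p * B'.sum) - ((∑ i ∈ Finset.range (p * q), ω i) - q * B.sum)| := by
            ring_nf
        _ ≤ _ := by rw [abs_sub_comm]; exact abs_sub _ _
    have hle : |(q : ℤ) * B.sum - (p : ℤ) * B'.sum| ≤ ((q : ℤ) + p) * ((M : ℤ) - 1) := by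
      calc _ ≤ _ := h3
        _ ≤ (q : ℤ) * ((M : ℤ) - 1) + (p : ℤ) * ((M : ℤ) - 1) := add_le_add k1 k2
        _ = ((q : ℤ) + p) * ((M : ℤ) - 1) := by ring
    have hpos : (0 : ℤ) < (q : ℤ) + p := by positivity
    nlinarith [hle, hpos]
  -- move to ℚ
  have hp0 : (0 : ℚ) < (p : ℚ) := by exact_mod_cast hp
  have hq0 : (0 : ℚ) < (q : ℚ) := by exact_mod_cast hq
  have hrw : wordSlope B - wordSlope B'
      = (((q : ℤ) * B.sum - (p : ℤ) * B'.sum : ℤ) : ℚ) / ((p : ℚ) * q) := by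
    unfold wordSlope
    rw [← hpdef, ← hqdef]
    push_cast
    field_simp
  have hrw2 : (M : ℚ) / (p : ℚ) + (M : ℚ) / (q : ℚ)
      = ((((q : ℤ) + p) * M : ℤ) : ℚ) / ((p : ℚ) * q) := by
    push_cast
    field_simp
  rw [hrw, hrw2, abs_div, abs_of_pos (by positivity : (0:ℚ) < (p:ℚ)*q)]
  have : |(((q : ℤ) * B.sum - (p : ℤ) * B'.sum : ℤ) : ℚ)| < ((((q : ℤ) + p) * M : ℤ) : ℚ) := by
    rw [← Int.cast_abs]
    exact_mod_cast main
  exact div_lt_div_of_pos_right this (by positivity)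
end

section
/- Let ω₁ and ω₂ be infinite words over finite integer alphabets, each with bounded additive complexity, and suppose that slope(ω₁) and slope(ω₂) both exist and slope(ω₁) ≠ slope(ω₂). Then there exists M ∈ ℕ such that slope(B₁) ≠ slope(B₂) whenever B₁ is a factor of ω₁, B₂ is a factor of ω₂, and |B₁|, |B₂| ≥ M. -/
private lemma ivt_aux (f : ℕ → ℤ) (s : ℤ) (hs : 0 < s)
    (hstep : ∀ m, |f (m+1) - f m| ≤ s) :
    ∀ n a (v : ℤ), f a ≤ v → v ≤ f (a + n) → ∃ j, |f j - v| < s := by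
  intro n
  induction n with
  | zero =>
    intro a v hh1 hh2
    simp only [Nat.add_zero] at hh2
    exact ⟨a, by rw [abs_lt]; omega⟩
  | succ n ih =>
    intro a v hh1 hh2
    by_cases hc : v ≤ f (a + n)
    · exact ih a v hh1 hc
    · refine ⟨a + n + 1, ?_⟩
      have hst := hstep (a + n)
      rw [abs_le] at hst
      have h2' : v ≤ f (a + n + 1) := by
        have : a + (n+1) = a + n + 1 := by omega
        rwa [this] at hh2
      rw [abs_lt]
      omega

private lemma ivt (f : ℕ → ℤ) (s : ℤ) (hs : 0 < s)
    (hstep : ∀ m, |f (m+1) - f m| ≤ s)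
    (a b : ℕ) (v : ℤ) (hh1 : f a ≤ v) (hh2 : v ≤ f b) :
    ∃ j, |f j - v| < s := by
  rcases le_total a b with hab | hab
  · obtain ⟨n, rfl⟩ := Nat.exists_eq_add_of_le hab
    exact ivt_aux f s hs hstep n a v hh1 hh2
  · obtain ⟨n, rfl⟩ := Nat.exists_eq_add_of_le hab
    have hstep' : ∀ m, |(fun m => -f m) (m+1) - (fun m => -f m) m| ≤ s := by
      intro m
      have h := hstep m
      have e : (fun m => -f m) (m+1) - (fun m => -f m) m = -(f (m+1) - f m) := by ring
      rw [e, abs_neg]; exact h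
    obtain ⟨j, hj⟩ := ivt_aux (fun m => -f m) s hs hstep' n b (-v)
      (by simpa using hh2) (by simpa using hh1)
    refine ⟨j, ?_⟩
    have : -f j - -v = -(f j - v) := by ring
    rw [this, abs_neg] at hj
    exact hj

private lemma diam (f : ℕ → ℤ) (s : ℤ) (hs : 0 < s)
    (hstep : ∀ m, |f (m+1) - f m| ≤ s)
    (T : Finset ℤ) (hT : ∀ m, f m ∈ T) (M : ℕ) (hM : T.card ≤ M)
    (a b : ℕ) : f b - f a ≤ 2 * s * M := by
  by_contra hcon
  push_neg at hcon
  classical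
  have hv : ∀ k : ℕ, k ≤ M → ∃ j, |f j - (f a + 2*s*k)| < s := by
    intro k hk
    apply ivt f s hs hstep a b
    · have : (0:ℤ) ≤ 2*s*k := mul_nonneg (by omega) (Int.ofNat_nonneg k)
      omega
    · have hkM : (k:ℤ) ≤ M := by exact_mod_cast hk
      nlinarith
  choose! j hj using hv
  have hinj : Set.InjOn (fun k => f (j k)) (Finset.range (M+1)) := by
    intro k hk k' hk' heq
    simp only [Finset.coe_range, Set.mem_Iio] at hk hk'
    by_contra hne
    have e1 := hj k (by omega)
    have e2 := hj k' (by omega)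
    simp only at heq
    rw [← heq] at e2
    rw [abs_lt] at e1 e2
    have hkk : (k:ℤ) ≠ k' := by exact_mod_cast hne
    rcases lt_or_gt_of_ne hkk with h | h
    · have h1' : (k:ℤ) - k' ≤ -1 := by omega
      nlinarith [e1.1, e1.2, e2.1, e2.2]
    · have h1' : (1:ℤ) ≤ (k:ℤ) - k' := by omega
      nlinarith [e1.1, e1.2, e2.1, e2.2]
  have hcard := Finset.card_le_card_of_injOn (fun k => f (j k))
    (fun k _ => hT (j k)) hinj
  rw [Finset.card_range] at hcard
  omega

private lemma list_sum_range_map (g : ℕ → ℤ) (n : ℕ) :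
    ((List.range n).map g).sum = ∑ i ∈ Finset.range n, g i := by
  induction n with
  | zero => simp
  | succ n ih =>
    rw [List.range_succ, List.map_append, List.sum_append, Finset.sum_range_succ, ih]
    simp

private lemma sum_range_add' (g : ℕ → ℤ) (a n : ℕ) :
    ∑ i ∈ Finset.range (a + n), g i
      = ∑ i ∈ Finset.range a, g i + ∑ i ∈ Finset.range n, g (a + i) := by
  induction n with
  | zero => simp
  | succ n ih =>
    rw [show a + (n+1) = (a + n) + 1 from rfl, Finset.sum_range_succ, ih,
      Finset.sum_range_succ, add_assoc]

private lemma sum_blocks (g : ℕ → ℤ) (n : ℕ) (k : ℕ) :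
    ∑ i ∈ Finset.range (k * n), g i
      = ∑ j ∈ Finset.range k, ∑ i ∈ Finset.range n, g (j * n + i) := by
  induction k with
  | zero => simp
  | succ k ih =>
    rw [Nat.succ_mul, sum_range_add', ih, Finset.sum_range_succ]

private lemma factor_sum_close (ω : ℕ → ℤ) (L : ℝ) (hsl : HasSlope ω L)
    {n : ℕ} (hn : 1 ≤ n) {C : ℤ}
    {S : ℤ} (hS : ∀ m : ℕ, |(∑ i ∈ Finset.range n, ω (m + i)) - S| ≤ C) :
    |(S : ℝ) - n * L| ≤ (C : ℝ) := by
  have hblo : ∀ k : ℕ, (k:ℤ) * (S - C) ≤ ∑ i ∈ Finset.range (k * n), ω i ∧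
      (∑ i ∈ Finset.range (k * n), ω i) ≤ (k:ℤ) * (S + C) := by
    intro k
    rw [sum_blocks ω n k]
    constructor
    · calc (k:ℤ) * (S - C) = ∑ _j ∈ Finset.range k, (S - C) := by
            rw [Finset.sum_const, Finset.card_range, nsmul_eq_mul]
        _ ≤ _ := Finset.sum_le_sum (fun j _ => by
            have := hS (j * n); rw [abs_le] at this; omega)
    · calc _ ≤ ∑ _j ∈ Finset.range k, (S + C) := Finset.sum_le_sum (fun j _ => by
            have := hS (j * n); rw [abs_le] at this; omega)
        _ = (k:ℤ) * (S + C) := by rw [Finset.sum_const, Finset.card_range, nsmul_eq_mul]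
  have hmono : Filter.Tendsto (fun k : ℕ => k * n) Filter.atTop Filter.atTop := by
    apply Filter.tendsto_atTop_atTop.2
    intro b
    exact ⟨b, fun a ha => le_trans ha (Nat.le_mul_of_pos_right a (by omega))⟩
  have hsub := hsl.comp hmono
  have hn0 : (0:ℝ) < n := by exact_mod_cast hn
  have hlb : ((S:ℝ) - C) / n ≤ L := by
    apply ge_of_tendsto hsub
    filter_upwards [Filter.eventually_ge_atTop 1] with k hk
    have hkn : (0:ℝ) < ((k * n : ℕ) : ℝ) := by
      have : 1 ≤ k * n := Nat.one_le_iff_ne_zero.2 (by positivity)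
      exact_mod_cast this
    simp only [Function.comp]
    rw [div_le_div_iff₀ hn0 hkn]
    have hz := (hblo k).1
    have hzr : ((k:ℝ)) * ((S:ℝ) - C) ≤ ∑ i ∈ Finset.range (k * n), (ω i : ℝ) := by
      exact_mod_cast hz
    have hk1 : (1:ℝ) ≤ (k:ℝ) := by exact_mod_cast hk
    push_cast
    nlinarith
  have hub : L ≤ ((S:ℝ) + C) / n := by
    apply le_of_tendsto hsub
    filter_upwards [Filter.eventually_ge_atTop 1] with k hk
    have hkn : (0:ℝ) < ((k * n : ℕ) : ℝ) := by
      have : 1 ≤ k * n := Nat.one_le_iff_ne_zero.2 (by positivity)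
      exact_mod_cast this
    simp only [Function.comp]
    rw [div_le_div_iff₀ hkn hn0]
    have hz := (hblo k).2
    have hzr : (∑ i ∈ Finset.range (k * n), (ω i : ℝ)) ≤ ((k:ℝ)) * ((S:ℝ) + C) := by
      exact_mod_cast hz
    have hk1 : (1:ℝ) ≤ (k:ℝ) := by exact_mod_cast hk
    push_cast
    nlinarith
  rw [div_le_iff₀ hn0] at hlb
  rw [le_div_iff₀ hn0] at hub
  rw [abs_le]
  constructor <;> nlinarith

private lemma key_bound (ω : ℕ → ℤ) (h : (Set.range ω).Finite)
    (hb : BoundedAddComplexity ω) (L : ℝ) (hsl : HasSlope ω L) :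
    ∃ C : ℝ, 0 ≤ C ∧ ∀ B : List ℤ, Factor ω B → 1 ≤ B.length →
      |(B.sum : ℝ) - B.length * L| ≤ C := by
  obtain ⟨M, hM⟩ := hb
  have hfin : (Set.range (fun i => |ω i|)).Finite := by
    have he : Set.range (fun i => |ω i|) = abs '' Set.range ω := by
      rw [← Set.range_comp]; rfl
    rw [he]; exact h.image _
  obtain ⟨K, hK⟩ := hfin.bddAbove
  have hKb : ∀ i, |ω i| ≤ K := fun i => hK ⟨i, rfl⟩
  have hK0 : (0:ℤ) ≤ K := le_trans (abs_nonneg _) (hKb 0)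
  set s : ℤ := 2*K + 1 with hs_def
  have hs0 : (0:ℤ) < s := by omega
  have hCnn : (0:ℤ) ≤ 2*s*M := mul_nonneg (by omega) (Int.ofNat_nonneg M)
  refine ⟨((2*s*M : ℤ) : ℝ), by exact_mod_cast hCnn, ?_⟩
  intro B hB hlen
  obtain ⟨m₀, hm₀⟩ := hB
  obtain ⟨T, hTcard, hTmem⟩ := hM B.length hlen
  set f : ℕ → ℤ := fun m => ∑ i ∈ Finset.range B.length, ω (m + i) with hf
  have hfT : ∀ m, f m ∈ T := by
    intro m
    have hsum : ((List.range B.length).map (fun i => ω (m + i))).sum = f m :=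
      list_sum_range_map _ _
    rw [← hsum]
    exact hTmem _ ⟨m, by simp⟩ (by simp)
  have hstep : ∀ m, |f (m+1) - f m| ≤ s := by
    intro m
    have e1 : (∑ i ∈ Finset.range (B.length+1), ω (m + i)) = f m + ω (m + B.length) := by
      rw [Finset.sum_range_succ]
    have e2 : (∑ i ∈ Finset.range (B.length+1), ω (m + i)) = f (m+1) + ω m := by
      rw [Finset.sum_range_succ']
      simp only [hf, Nat.add_zero]
      congr 1
      exact Finset.sum_congr rfl fun i _ => by rw [show m + (i+1) = m+1+i by omega]
    have b1 := hKb m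
    have b2 := hKb (m + B.length)
    rw [abs_le] at b1 b2 ⊢
    omega
  have hBsum : B.sum = f m₀ := by
    conv_lhs => rw [hm₀]
    exact list_sum_range_map _ _
  have hdiam : ∀ m, |f m - f m₀| ≤ 2*s*M := by
    intro m
    have d1 := diam f s hs0 hstep T hfT M hTcard m₀ m
    have d2 := diam f s hs0 hstep T hfT M hTcard m m₀
    rw [abs_le]
    constructor <;> linarith
  have := factor_sum_close ω L hsl hlen (S := f m₀) (C := 2*s*M) hdiam
  rw [hBsum]
  exact this

/-- Words with bounded additive complexity and different slopes: long enough factors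
have different slopes. -/
theorem stmt2 (ω₁ ω₂ : ℕ → ℤ)
    (h1 : (Set.range ω₁).Finite) (h2 : (Set.range ω₂).Finite)
    (hb1 : BoundedAddComplexity ω₁) (hb2 : BoundedAddComplexity ω₂)
    (L₁ L₂ : ℝ) (hs1 : HasSlope ω₁ L₁) (hs2 : HasSlope ω₂ L₂) (hne : L₁ ≠ L₂) :
    ∃ M : ℕ, ∀ B₁ B₂ : List ℤ, Factor ω₁ B₁ → Factor ω₂ B₂ →
      M ≤ B₁.length → M ≤ B₂.length → wordSlope B₁ ≠ wordSlope B₂ := by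
  obtain ⟨C₁, hC₁0, hC₁⟩ := key_bound ω₁ h1 hb1 L₁ hs1
  obtain ⟨C₂, hC₂0, hC₂⟩ := key_bound ω₂ h2 hb2 L₂ hs2
  have hε : 0 < |L₁ - L₂| := abs_pos.2 (sub_ne_zero.2 hne)
  obtain ⟨M, hMgt⟩ := exists_nat_gt ((C₁ + C₂) / |L₁ - L₂|)
  refine ⟨M + 1, ?_⟩
  intro B₁ B₂ hf1 hf2 hl1 hl2 heq
  have hn1 : 1 ≤ B₁.length := by omega
  have hn2 : 1 ≤ B₂.length := by omega
  have e1 := hC₁ B₁ hf1 hn1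
  have e2 := hC₂ B₂ hf2 hn2
  have hn1r : (0:ℝ) < B₁.length := by exact_mod_cast hn1
  have hn2r : (0:ℝ) < B₂.length := by exact_mod_cast hn2
  have hM1r : (0:ℝ) < (M:ℝ) + 1 := by positivity
  have hl1r : ((M:ℝ) + 1) ≤ B₁.length := by exact_mod_cast hl1
  have hl2r : ((M:ℝ) + 1) ≤ B₂.length := by exact_mod_cast hl2
  set x : ℝ := (B₁.sum : ℝ) / (B₁.length : ℝ) with hx
  have hxeq : x = (B₂.sum : ℝ) / (B₂.length : ℝ) := by
    have hr : ((wordSlope B₁ : ℚ) : ℝ) = ((wordSlope B₂ : ℚ) : ℝ) := by rw [heq]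
    unfold wordSlope at hr
    rw [Rat.cast_div, Rat.cast_intCast, Rat.cast_natCast, Rat.cast_div,
      Rat.cast_intCast, Rat.cast_natCast] at hr
    rw [hx, hr]
  have hst1 : |x - L₁| ≤ C₁ / B₁.length := by
    rw [hx, show (B₁.sum:ℝ)/(B₁.length:ℝ) - L₁
        = ((B₁.sum:ℝ) - B₁.length * L₁) / B₁.length by field_simp,
      abs_div, abs_of_pos hn1r]
    gcongr
  have hst2 : |x - L₂| ≤ C₂ / B₂.length := by
    rw [hxeq, show (B₂.sum:ℝ)/(B₂.length:ℝ) - L₂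
        = ((B₂.sum:ℝ) - B₂.length * L₂) / B₂.length by field_simp,
      abs_div, abs_of_pos hn2r]
    gcongr
  have hd1 : C₁ / B₁.length ≤ C₁ / ((M:ℝ) + 1) := by gcongr
  have hd2 : C₂ / B₂.length ≤ C₂ / ((M:ℝ) + 1) := by gcongr
  have hsum : (C₁ + C₂) < ((M:ℝ) + 1) * |L₁ - L₂| := by
    rw [div_lt_iff₀ hε] at hMgt
    nlinarith
  have htri : |L₁ - L₂| ≤ |L₁ - x| + |x - L₂| := by
    have := abs_sub_le L₁ x L₂
    linarith [this]
  rw [abs_sub_comm L₁ x] at htri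
  have hcomb : |L₁ - L₂| ≤ (C₁ + C₂) / ((M:ℝ) + 1) := by
    rw [add_div]
    linarith
  have : (C₁ + C₂) / ((M:ℝ) + 1) < |L₁ - L₂| := by
    rw [div_lt_iff₀ hM1r]
    nlinarith
  linarith
end

section
/- Let ω be an infinite word over a finite integer alphabet with bounded additive complexity (so slope(ω) exists). Then slope(ω) is a rational number if and only if there exists an infinite set C of nonempty factors of ω such that any two members of C have equal slope. -/
private lemma stmt5_crossing (g : ℕ → ℤ) (c : ℤ) (hstep : ∀ i, g (i+1) - g i ≤ c) (v : ℤ) :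
    ∀ b a, a ≤ b → g a ≤ v → v < g b → ∃ i, a ≤ i ∧ i ≤ b ∧ v < g i ∧ g i ≤ v + c := by
  intro b
  induction b with
  | zero =>
    intro a ha h1 h2
    interval_cases a
    omega
  | succ b ih =>
    intro a ha h1 h2
    by_cases hab : a ≤ b
    · by_cases hv : g b ≤ v
      · exact ⟨b + 1, by omega, le_refl _, h2, by have := hstep b; omega⟩
      · obtain ⟨i, hi1, hi2, hi3⟩ := ih a hab h1 (by omega)
        exact ⟨i, hi1, by omega, hi3⟩
    · have : a = b + 1 := by omega
      subst this
      omega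

private lemma stmt5_chain (g : ℕ → ℤ) (c : ℤ) (hc : 0 ≤ c)
    (hstep : ∀ i, g (i+1) - g i ≤ c) (T : Finset ℤ) (hT : ∀ i, g i ∈ T) :
    ∀ a b, a ≤ b → g b - g a ≤ c * T.card := by
  intro a b hab
  by_contra hgt
  push_neg at hgt
  set N := T.card with hN
  have hex : ∀ j : ℕ, j ≤ N → ∃ x, x ∈ T ∧ g a + c * j < x ∧ x ≤ g a + c * j + c := by
    intro j hj
    have hcj : 0 ≤ c * (j : ℤ) := mul_nonneg hc (by positivity)
    have hcjN : c * (j : ℤ) ≤ c * (N : ℤ) := by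
      apply mul_le_mul_of_nonneg_left _ hc
      exact_mod_cast hj
    obtain ⟨i, _, _, hi3, hi4⟩ := stmt5_crossing g c hstep (g a + c * j) b a hab
      (by omega) (by omega)
    exact ⟨g i, hT i, hi3, hi4⟩
  classical
  let F : ℕ → ℤ := fun j => if h : j ≤ N then (hex j h).choose else 0
  have hFmem : ∀ j, j ≤ N → F j ∈ T := by
    intro j hj
    simp only [F, dif_pos hj]
    exact (hex j hj).choose_spec.1
  have hFlt : ∀ j, j ≤ N → g a + c * j < F j ∧ F j ≤ g a + c * j + c := by
    intro j hj
    simp only [F, dif_pos hj]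
    exact ⟨(hex j hj).choose_spec.2.1, (hex j hj).choose_spec.2.2⟩
  have hmono : ∀ j j', j < j' → j' ≤ N → F j < F j' := by
    intro j j' hjj hj'
    have h1 := hFlt j (by omega)
    have h2 := hFlt j' hj'
    have : c * ((j : ℤ) + 1) ≤ c * (j' : ℤ) := by
      apply mul_le_mul_of_nonneg_left _ hc
      exact_mod_cast hjj
    have hr : c * ((j : ℤ) + 1) = c * j + c := by ring
    omega
  have hcard : (Finset.range (N + 1)).card ≤ T.card := by
    apply Finset.card_le_card_of_injOn F
    · intro j hj
      exact hFmem j (by simpa using Nat.lt_succ_iff.mp (Finset.mem_range.mp hj))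
    · intro j hj j' hj' heq
      simp only [Finset.coe_range, Set.mem_Iio] at hj hj'
      rcases lt_trichotomy j j' with h | h | h
      · exact absurd heq (ne_of_lt (hmono j j' h (by omega)))
      · exact h
      · exact absurd heq.symm (ne_of_lt (hmono j' j h (by omega)))
  simp at hcard
  omega

private lemma stmt5_chain_abs (g : ℕ → ℤ) (c : ℤ) (hc : 0 ≤ c)
    (hstep : ∀ i, |g (i+1) - g i| ≤ c) (T : Finset ℤ) (hT : ∀ i, g i ∈ T) :
    ∀ a b, |g b - g a| ≤ c * T.card := by
  have h1 : ∀ a b, a ≤ b → g b - g a ≤ c * T.card :=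
    stmt5_chain g c hc (fun i => (abs_le.mp (hstep i)).2) T hT
  have h2 : ∀ a b, a ≤ b → g a - g b ≤ c * T.card := by
    intro a b hab
    have := stmt5_chain (fun i => -g i) c hc
      (fun i => by have := abs_le.mp (hstep i); simp only [neg_sub_neg]; omega)
      (T.image (fun x => -x)) (fun i => Finset.mem_image_of_mem _ (hT i)) a b hab
    have hcard : (T.image (fun x : ℤ => -x)).card = T.card :=
      Finset.card_image_of_injective _ neg_injective
    rw [hcard] at this
    simp only [neg_sub_neg] at this
    omega
  intro a b
  rcases le_total a b with h | h
  · have := h1 a b h; have := h2 a b h; rw [abs_le]; omega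
  · have := h1 b a h; have := h2 b a h; rw [abs_le]; omega

private lemma stmt5_pair (ω : ℕ → ℤ) (hfin : (Set.range ω).Finite)
    (hb : BoundedAddComplexity ω) :
    ∃ D : ℤ, 0 ≤ D ∧ ∀ n, 1 ≤ n → ∀ m1 m2 : ℕ,
      |(∑ i ∈ Finset.range n, ω (m1+i)) - (∑ i ∈ Finset.range n, ω (m2+i))| ≤ D := by
  obtain ⟨M, hM⟩ := hb
  obtain ⟨A, hA⟩ : ∃ A : ℤ, ∀ i, |ω i| ≤ A := by
    obtain ⟨A, hA⟩ := (hfin.image (fun x => |x|)).bddAbove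
    exact ⟨A, fun i => hA (Set.mem_image_of_mem _ (Set.mem_range_self i))⟩
  have hA0 : 0 ≤ A := le_trans (abs_nonneg _) (hA 0)
  refine ⟨2*A*M, by positivity, ?_⟩
  intro n hn m1 m2
  obtain ⟨T, hTcard, hTmem⟩ := hM n hn
  have hmem : ∀ m : ℕ, (∑ i ∈ Finset.range n, ω (m+i)) ∈ T := by
    intro m
    have hfac : Factor ω ((List.range n).map (fun i => ω (m+i))) := by
      refine ⟨m, ?_⟩
      simp
    have := hTmem _ hfac (by simp)
    exact this
  have hstep : ∀ m : ℕ,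
      |(∑ i ∈ Finset.range n, ω (m+1+i)) - (∑ i ∈ Finset.range n, ω (m+i))| ≤ 2*A := by
    intro m
    have h1 : ∑ i ∈ Finset.range (n+1), ω (m+i)
        = (∑ i ∈ Finset.range n, ω (m+i)) + ω (m+n) := Finset.sum_range_succ _ n
    have h2 : ∑ i ∈ Finset.range (n+1), ω (m+i)
        = (∑ i ∈ Finset.range n, ω (m+(i+1))) + ω (m+0) := Finset.sum_range_succ' _ n
    have h3 : ∑ i ∈ Finset.range n, ω (m+(i+1)) = ∑ i ∈ Finset.range n, ω (m+1+i) :=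
      Finset.sum_congr rfl (fun i _ => congrArg ω (by omega))
    have hd : (∑ i ∈ Finset.range n, ω (m+1+i)) - (∑ i ∈ Finset.range n, ω (m+i))
        = ω (m+n) - ω (m+0) := by omega
    rw [hd]
    have h4 : |ω (m+n) - ω (m+0)| ≤ |ω (m+n)| + |ω (m+0)| := abs_sub _ _
    have := hA (m+n); have := hA (m+0)
    omega
  have := stmt5_chain_abs (fun m => ∑ i ∈ Finset.range n, ω (m+i)) (2*A)
    (by positivity) hstep T hmem m2 m1
  calc |(∑ i ∈ Finset.range n, ω (m1+i)) - (∑ i ∈ Finset.range n, ω (m2+i))|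
      ≤ 2*A * T.card := this
    _ ≤ 2*A*M := by
        apply mul_le_mul_of_nonneg_left _ (by positivity)
        exact_mod_cast hTcard

private lemma stmt5_dev (ω : ℕ → ℤ) (L : ℝ) (hs : HasSlope ω L) (D : ℤ)
    (hpair : ∀ n, 1 ≤ n → ∀ m1 m2 : ℕ,
      |(∑ i ∈ Finset.range n, ω (m1+i)) - (∑ i ∈ Finset.range n, ω (m2+i))| ≤ D) :
    ∀ n, 1 ≤ n → ∀ m : ℕ,
      |((∑ i ∈ Finset.range n, ω (m+i) : ℤ) : ℝ) - L * n| ≤ (D : ℝ) := by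
  intro n hn m
  set S : ℕ → ℤ := fun t => ∑ i ∈ Finset.range t, ω i with hS
  set gm : ℤ := ∑ i ∈ Finset.range n, ω (m+i) with hgm
  have hb : ∀ k : ℕ, (k:ℤ) * (gm - D) ≤ S (k*n) ∧ S (k*n) ≤ (k:ℤ) * (gm + D) := by
    intro k
    induction k with
    | zero => simp [hS]
    | succ k ih =>
      have hsplit : S ((k+1)*n) = S (k*n) + (∑ i ∈ Finset.range n, ω (k*n + i)) := by
        rw [Nat.succ_mul]; exact Finset.sum_range_add ω (k*n) n
      have hmid := abs_le.mp (hpair n hn (k*n) m)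
      have e1 : ((k:ℤ)+1) * (gm - D) = (k:ℤ)*(gm - D) + (gm - D) := by ring
      have e2 : ((k:ℤ)+1) * (gm + D) = (k:ℤ)*(gm + D) + (gm + D) := by ring
      constructor
      · push_cast
        rw [e1, hsplit]
        have := ih.1
        rw [← hgm] at hmid
        omega
      · push_cast
        rw [e2, hsplit]
        have := ih.2
        rw [← hgm] at hmid
        omega
  have htop : Filter.Tendsto (fun k : ℕ => k * n) Filter.atTop Filter.atTop :=
    Filter.tendsto_atTop_mono (fun k => Nat.le_mul_of_pos_right k (by omega))
      Filter.tendsto_id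
  have hcast : ∀ t : ℕ, ((S t : ℤ) : ℝ) = ∑ i ∈ Finset.range t, (ω i : ℝ) := by
    intro t; simp only [hS]; push_cast; rfl
  have hs1 : Filter.Tendsto (fun k : ℕ => ((S (k*n) : ℤ) : ℝ) / ((k*n : ℕ) : ℝ))
      Filter.atTop (nhds L) := by
    refine (hs.comp htop).congr fun k => ?_
    simp only [Function.comp_apply, hcast]
  have hs2 := hs1.const_mul (n : ℝ)
  have hmul : Filter.Tendsto (fun k : ℕ => ((S (k*n) : ℤ) : ℝ) / (k : ℝ))
      Filter.atTop (nhds ((n:ℝ) * L)) := by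
    apply hs2.congr'
    filter_upwards [Filter.eventually_ge_atTop 1] with k hk
    have hk0 : (k : ℝ) ≠ 0 := Nat.cast_ne_zero.mpr (by omega)
    have hn0 : (n : ℝ) ≠ 0 := Nat.cast_ne_zero.mpr (by omega)
    have : ((k*n : ℕ) : ℝ) = (k : ℝ) * (n : ℝ) := by push_cast; ring
    rw [this]
    field_simp
  have hlow : (gm : ℝ) - D ≤ (n:ℝ) * L := by
    apply ge_of_tendsto hmul
    filter_upwards [Filter.eventually_ge_atTop 1] with k hk
    have hk0 : (0 : ℝ) < (k : ℝ) := by exact_mod_cast Nat.pos_of_ne_zero (by omega)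
    rw [le_div_iff₀ hk0]
    have hcast2 : ((k:ℤ) * (gm - D) : ℤ) ≤ (S (k*n) : ℤ) := (hb k).1
    calc ((gm : ℝ) - D) * k = (((k:ℤ) * (gm - D) : ℤ) : ℝ) := by push_cast; ring
      _ ≤ ((S (k*n) : ℤ) : ℝ) := by exact_mod_cast hcast2
  have hhigh : (n:ℝ) * L ≤ (gm : ℝ) + D := by
    apply le_of_tendsto hmul
    filter_upwards [Filter.eventually_ge_atTop 1] with k hk
    have hk0 : (0 : ℝ) < (k : ℝ) := by exact_mod_cast Nat.pos_of_ne_zero (by omega)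
    rw [div_le_iff₀ hk0]
    have hcast2 : (S (k*n) : ℤ) ≤ ((k:ℤ) * (gm + D) : ℤ) := (hb k).2
    calc ((S (k*n) : ℤ) : ℝ) ≤ (((k:ℤ) * (gm + D) : ℤ) : ℝ) := by exact_mod_cast hcast2
      _ = ((gm : ℝ) + D) * k := by push_cast; ring
  rw [abs_le]
  constructor <;> [linarith [mul_comm L (n:ℝ)]; linarith [mul_comm L (n:ℝ)]]

/-- For ω with bounded additive complexity, the slope is rational iff there is an
infinite collection of nonempty factors all having the same slope. -/
theorem stmt5 (ω : ℕ → ℤ) (hfin : (Set.range ω).Finite)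
    (hb : BoundedAddComplexity ω) (L : ℝ) (hs : HasSlope ω L) :
    (∃ α : ℚ, (α : ℝ) = L) ↔
      ∃ C : Set (List ℤ), C.Infinite ∧ (∀ B ∈ C, Factor ω B ∧ B ≠ []) ∧
        ∀ B ∈ C, ∀ B' ∈ C, wordSlope B = wordSlope B' := by
  classical
  obtain ⟨D, hD0, hpair⟩ := stmt5_pair ω hfin hb
  have hdev := stmt5_dev ω L hs D hpair
  set S : ℕ → ℤ := fun t => ∑ i ∈ Finset.range t, ω i with hSdef
  have hfact : ∀ m n : ℕ, ∑ i ∈ Finset.range n, ω (m+i) = S (m+n) - S m := by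
    intro m n
    have := Finset.sum_range_add ω m n
    simp only [hSdef]
    omega
  constructor
  · -- rational slope implies infinitely many factors of equal slope
    rintro ⟨α, hα⟩
    set p : ℤ := α.num with hp
    set q : ℕ := α.den with hq
    have hq0 : 0 < q := α.pos
    have hq0Q : (q : ℚ) ≠ 0 := Nat.cast_ne_zero.mpr (by omega)
    have hαq : (α : ℝ) = (p : ℝ) / (q : ℝ) := by
      rw [Rat.cast_def]
    have hLq : ∀ k : ℕ, L * ((q*k : ℕ):ℝ) = ((p * k : ℤ):ℝ) := by
      intro k
      rw [← hα, hαq]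
      have hq0R : (q : ℝ) ≠ 0 := Nat.cast_ne_zero.mpr (by omega)
      push_cast
      field_simp
    set e : ℕ → ℤ := fun k => S (q*(k+1)) - p*(k+1) with he
    have hbound : ∀ k : ℕ, |e k| ≤ D := by
      intro k
      have h1 : 1 ≤ q*(k+1) := by
        calc 1 = 1*1 := by omega
        _ ≤ q*(k+1) := Nat.mul_le_mul hq0 (by omega)
      have h2 := hdev (q*(k+1)) h1 0
      have h3 : ∑ i ∈ Finset.range (q*(k+1)), ω (0+i) = S (q*(k+1)) := by
        simp only [hSdef]
        exact Finset.sum_congr rfl (fun i _ => congrArg ω (by omega))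
      rw [h3, hLq (k+1)] at h2
      have h4 : ((e k : ℤ) : ℝ) = ((S (q*(k+1)) : ℤ):ℝ) - ((p * (k+1) : ℤ):ℝ) := by
        simp only [he]; push_cast; ring
      have h5 : |((e k : ℤ) : ℝ)| ≤ (D : ℝ) := by rw [h4]; exact_mod_cast h2
      exact_mod_cast h5.trans_eq rfl
    haveI : Finite ↥(Set.Icc (-D) D) := (Set.finite_Icc (-D) D).to_subtype
    obtain ⟨v, hv⟩ := Finite.exists_infinite_fiber
      (fun k : ℕ => (⟨e k, Set.mem_Icc.mpr (abs_le.mp (hbound k))⟩ : ↥(Set.Icc (-D) D)))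
    have hPk : ∀ k ∈ (fun k : ℕ => (⟨e k, Set.mem_Icc.mpr (abs_le.mp (hbound k))⟩ :
        ↥(Set.Icc (-D) D))) ⁻¹' {v}, e k = (v : ℤ) := by
      intro k hk
      exact congrArg Subtype.val (Set.mem_singleton_iff.mp hk)
    set P := (fun k : ℕ => (⟨e k, Set.mem_Icc.mpr (abs_le.mp (hbound k))⟩ :
        ↥(Set.Icc (-D) D))) ⁻¹' {v} with hPdef
    have hvI : P.Infinite := Set.infinite_coe_iff.mp hv
    obtain ⟨k₀, hk₀⟩ := hvI.nonempty
    have hP' : (P \ Set.Iic k₀).Infinite := hvI.diff (Set.finite_Iic k₀)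
    set F : ℕ → List ℤ :=
      fun k => (List.range (q*(k+1) - q*(k₀+1))).map (fun i => ω (q*(k₀+1) + i)) with hF
    have hlen : ∀ k, (F k).length = q*(k+1) - q*(k₀+1) := by
      intro k; simp [hF]
    have hmulle : ∀ k, k₀ < k → q*(k₀+1) ≤ q*(k+1) :=
      fun k hk => Nat.mul_le_mul_left _ (by omega)
    have hmullt : ∀ k, k₀ < k → q*(k₀+1) < q*(k+1) := by
      intro k hk
      have h1 : q*(k₀+1+1) ≤ q*(k+1) := Nat.mul_le_mul_left _ (by omega)
      rw [Nat.mul_succ] at h1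
      omega
    have hsum : ∀ k ∈ P \ Set.Iic k₀, (F k).sum = p * ((k:ℤ) - (k₀:ℤ)) := by
      intro k hk
      have hkgt : k₀ < k := by simpa using hk.2
      have h1 : (F k).sum = ∑ i ∈ Finset.range (q*(k+1) - q*(k₀+1)), ω (q*(k₀+1) + i) := rfl
      rw [h1, hfact]
      have h2 : q*(k₀+1) + (q*(k+1) - q*(k₀+1)) = q*(k+1) := by
        have := hmulle k hkgt; omega
      rw [h2]
      have h3 : e k = v := hPk k hk.1
      have h4 : e k₀ = v := hPk k₀ hk₀
      simp only [he] at h3 h4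
      have hS1 : S (q*(k+1)) = p*((k:ℤ)+1) + (v:ℤ) := by omega
      have hS2 : S (q*(k₀+1)) = p*((k₀:ℤ)+1) + (v:ℤ) := by omega
      have hring : p*((k:ℤ)+1) - p*((k₀:ℤ)+1) = p*((k:ℤ) - (k₀:ℤ)) := by ring
      omega
    have hslope : ∀ k ∈ P \ Set.Iic k₀, wordSlope (F k) = α := by
      intro k hk
      have hkgt : k₀ < k := by simpa using hk.2
      have hlenQ : ((F k).length : ℚ) = (q : ℚ) * ((k:ℚ) - (k₀:ℚ)) := by
        rw [hlen k]
        have h2 := hmulle k hkgt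
        rw [Nat.cast_sub h2]
        push_cast
        ring
      have hd0 : ((k:ℚ) - (k₀:ℚ)) ≠ 0 := by
        have : (k₀:ℚ) < (k:ℚ) := by exact_mod_cast hkgt
        exact sub_ne_zero.mpr (ne_of_gt this)
      rw [wordSlope, hsum k hk, hlenQ]
      push_cast
      have hα2 : α = (p:ℚ)/(q:ℚ) := by
        rw [hp, hq]; exact (Rat.num_div_den α).symm
      rw [hα2, div_eq_div_iff (mul_ne_zero hq0Q hd0) hq0Q]
      ring
    refine ⟨F '' (P \ Set.Iic k₀), ?_, ?_, ?_⟩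
    · apply hP'.image
      intro k hk k' hk' heq
      have hkgt : k₀ < k := by simpa using hk.2
      have hkgt' : k₀ < k' := by simpa using hk'.2
      have h1 := congrArg List.length heq
      rw [hlen, hlen] at h1
      have h2 := hmulle k hkgt
      have h3 := hmulle k' hkgt'
      have h4 : q*(k+1) = q*(k'+1) := by omega
      have := Nat.eq_of_mul_eq_mul_left hq0 h4
      omega
    · rintro B ⟨k, hk, rfl⟩
      have hkgt : k₀ < k := by simpa using hk.2
      constructor
      · refine ⟨q*(k₀+1), ?_⟩
        rw [hlen k]
      · have h1 : 0 < (F k).length := by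
          rw [hlen k]
          have := hmullt k hkgt
          omega
        exact List.ne_nil_of_length_pos h1
    · rintro B ⟨k, hk, rfl⟩ B' ⟨k', hk', rfl⟩
      rw [hslope k hk, hslope k' hk']
  · -- infinitely many factors of equal slope implies rational slope
    rintro ⟨C, hCinf, hCfac, hCslope⟩
    obtain ⟨B₀, hB₀⟩ := hCinf.nonempty
    refine ⟨wordSlope B₀, ?_⟩
    set α := wordSlope B₀ with hαdef
    have hlen0 : ∀ B ∈ C, (0:ℚ) < (B.length : ℚ) := by
      intro B hB
      have := (hCfac B hB).2
      have hl : 0 < B.length := List.length_pos_iff.mpr this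
      exact_mod_cast hl
    have hslopeEq : ∀ B ∈ C, (B.sum : ℚ) = α * (B.length : ℚ) := by
      intro B hB
      have h := hCslope B hB B₀ hB₀
      rw [hαdef, ← h, wordSlope, div_mul_cancel₀]
      exact ne_of_gt (hlen0 B hB)
    have hdevB : ∀ B ∈ C, |((B.sum : ℤ) : ℝ) - L * (B.length : ℝ)| ≤ (D : ℝ) := by
      intro B hB
      obtain ⟨m, hm⟩ := (hCfac B hB).1
      have hl : 1 ≤ B.length := by
        have := (hCfac B hB).2
        have : 0 < B.length := List.length_pos_iff.mpr this
        omega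
      have hsum : B.sum = ∑ i ∈ Finset.range B.length, ω (m+i) := by
        conv_lhs => rw [hm]
        rfl
      rw [hsum]
      exact hdev B.length hl m
    have hunb : ∀ N : ℕ, ∃ B ∈ C, N ≤ B.length := by
      intro N
      by_contra h
      push_neg at h
      haveI := hfin.to_subtype
      have hfin2 : {l : List ↥(Set.range ω) | l.length ≤ N}.Finite :=
        List.finite_length_le _ N
      have hsub : C ⊆ (List.map (Subtype.val) ''
          {l : List ↥(Set.range ω) | l.length ≤ N}) := by
        intro B hB
        obtain ⟨m, hm⟩ := (hCfac B hB).1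
        refine ⟨(List.range B.length).map
          (fun i => (⟨ω (m+i), Set.mem_range_self _⟩ : ↥(Set.range ω))), ?_, ?_⟩
        · simp only [Set.mem_setOf_eq, List.length_map, List.length_range]
          exact (h B hB).le
        · rw [List.map_map]
          exact hm.symm
      exact hCinf (Set.Finite.subset (hfin2.image _) hsub)
    have habs : ∀ N : ℕ, 1 ≤ N → |(α : ℝ) - L| ≤ (D : ℝ) / (N : ℝ) := by
      intro N hN
      obtain ⟨B, hB, hBN⟩ := hunb N
      have hlpos : (0:ℝ) < (B.length : ℝ) := by
        have := hlen0 B hB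
        exact_mod_cast this
      have hNpos : (0:ℝ) < (N : ℝ) := by exact_mod_cast hN
      have h1 : ((B.sum : ℤ) : ℝ) = (α : ℝ) * (B.length : ℝ) := by
        have h := hslopeEq B hB
        obtain ⟨s, hs⟩ : ∃ s : ℤ, B.sum = s := ⟨B.sum, rfl⟩
        rw [hs] at h ⊢
        exact_mod_cast congrArg (fun x : ℚ => (x : ℝ)) h
      have h3 := hdevB B hB
      rw [h1] at h3
      have h4 : |(α : ℝ) - L| * (B.length : ℝ) ≤ (D : ℝ) := by
        calc |(α : ℝ) - L| * (B.length : ℝ)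
            = |((α : ℝ) - L) * (B.length : ℝ)| := by
              rw [abs_mul, abs_of_pos hlpos]
          _ = |(α : ℝ) * (B.length : ℝ) - L * (B.length : ℝ)| := by ring_nf
          _ ≤ (D : ℝ) := h3
      have h5 : |(α : ℝ) - L| ≤ (D : ℝ) / (B.length : ℝ) := by
        rw [le_div_iff₀ hlpos]
        exact h4
      refine h5.trans ?_
      apply div_le_div_of_nonneg_left (by exact_mod_cast hD0) hNpos (by exact_mod_cast hBN)
    have hzero : Filter.Tendsto (fun N : ℕ => (D : ℝ) / (N : ℝ))
        Filter.atTop (nhds 0) := tendsto_const_div_atTop_nhds_zero_nat _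
    have h6 : |(α : ℝ) - L| ≤ 0 := by
      apply ge_of_tendsto hzero
      filter_upwards [Filter.eventually_ge_atTop 1] with N hN
      exact habs N hN
    have h7 : (α : ℝ) - L = 0 := abs_nonpos_iff.mp h6
    linarith
end

section
/- Let ω be an infinite word over a finite integer alphabet with bounded additive complexity (so slope(ω) exists). Then slope(ω) is irrational if and only if for every rational number α the set {B : B is a nonempty factor of ω and slope(B) = α} is finite. -/


private def Pre (ω : ℕ → ℤ) (n : ℕ) : ℤ := ∑ i ∈ Finset.range n, ω i

private lemma factor_sum (ω : ℕ → ℤ) (m n : ℕ) :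
    ((List.range n).map (fun i => ω (m + i))).sum = Pre ω (m + n) - Pre ω m := by
  have h : ((List.range n).map (fun i => ω (m + i))).sum = ∑ i ∈ Finset.range n, ω (m + i) := rfl
  rw [h, Pre, Pre, Finset.sum_range_add]
  ring

private lemma ivt_s6 (s : ℕ → ℤ) (d : ℤ) (hstep : ∀ m, |s (m + 1) - s m| ≤ d)
    (a : ℕ) (x : ℤ) :
    ∀ b : ℕ, a ≤ b → s a ≤ x → x < s b →
      ∃ m, a ≤ m ∧ m ≤ b ∧ x < s m ∧ s m ≤ x + d := by
  intro b
  induction b with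
  | zero =>
    intro hab hax hxb
    interval_cases a
    omega
  | succ c ih =>
    intro hab hax hxb
    by_cases hc : s c ≤ x
    · have hst := abs_le.mp (hstep c)
      exact ⟨c + 1, hab, le_refl _, hxb, by omega⟩
    · push_neg at hc
      have hac : a ≤ c := by
        rcases Nat.lt_succ_iff_lt_or_eq.mp (Nat.lt_succ_of_le hab) with h | h
        · omega
        · subst h; omega
      obtain ⟨m, h1, h2, h3, h4⟩ := ih hac hax hc
      exact ⟨m, h1, Nat.le_succ_of_le h2, h3, h4⟩

private lemma gap (s : ℕ → ℤ) (d : ℤ) (hd : 0 < d) (hstep : ∀ m, |s (m + 1) - s m| ≤ d)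
    (T : Finset ℤ) (hT : ∀ m, s m ∈ T) (a b : ℕ) (hab : a ≤ b) :
    s b - s a ≤ d * T.card := by
  by_contra hcon
  push_neg at hcon
  have Hm : ∀ j : ℕ, ∃ y, y ∈ T ∧
      (j ≤ T.card → s a + d * j < y ∧ y ≤ s a + d * j + d) := by
    intro j
    by_cases hj : j ≤ T.card
    · have hjz : (j : ℤ) ≤ (T.card : ℤ) := Int.ofNat_le.mpr hj
      have h1 : s a ≤ s a + d * j := by nlinarith
      have h2 : s a + d * j < s b := by nlinarith [mul_le_mul_of_nonneg_left hjz hd.le]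
      obtain ⟨m, _, _, h3, h4⟩ := ivt_s6 s d hstep a (s a + d * j) b hab h1 h2
      exact ⟨s m, hT m, fun _ => ⟨h3, h4⟩⟩
    · exact ⟨s a, hT a, fun h => absurd h hj⟩
  choose g hgT hgI using Hm
  obtain ⟨j, hj, j', hj', hne, heq⟩ :=
    Finset.exists_ne_map_eq_of_card_lt_of_maps_to
      (s := Finset.range (T.card + 1)) (t := T) (by simp) (fun j _ => hgT j)
  rw [Finset.mem_range] at hj hj'
  have hj1 := hgI j (by omega)
  have hj2 := hgI j' (by omega)
  rcases Nat.lt_or_ge j j' with h | h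
  · have : (j : ℤ) + 1 ≤ (j' : ℤ) := by exact_mod_cast h
    nlinarith [hj1.2, hj2.1]
  · have hlt : j' < j := by omega
    have : (j' : ℤ) + 1 ≤ (j : ℤ) := by exact_mod_cast hlt
    nlinarith [hj2.2, hj1.1]

private lemma precast (ω : ℕ → ℤ) (n : ℕ) :
    ((Pre ω n : ℤ) : ℝ) = ∑ i ∈ Finset.range n, (ω i : ℝ) := by
  rw [Pre]; push_cast; rfl

private lemma key (ω : ℕ → ℤ) (hfin : (Set.range ω).Finite) (hb : BoundedAddComplexity ω)
    (L : ℝ) (hs : HasSlope ω L) :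
    ∃ C : ℝ, 0 < C ∧ ∀ m n : ℕ, 1 ≤ n →
      |((Pre ω (m + n) - Pre ω m : ℤ) : ℝ) - n * L| ≤ C := by
  -- bound on the alphabet
  obtain ⟨K, hK⟩ : ∃ K : ℤ, ∀ i, |ω i| ≤ K := by
    have h1 : (Set.range fun i => |ω i|).Finite := by
      have : (Set.range fun i => |ω i|) = abs '' Set.range ω := by
        rw [← Set.range_comp]; rfl
      rw [this]; exact hfin.image _
    obtain ⟨K, hK⟩ := h1.bddAbove
    exact ⟨K, fun i => hK ⟨i, rfl⟩⟩
  set d : ℤ := 2 * K + 1 with hd_def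
  have hd : 0 < d := by have := (abs_nonneg (ω 0)).trans (hK 0); omega
  obtain ⟨M, hM⟩ := hb
  set C : ℝ := ((d * M : ℤ) : ℝ) + 1 with hC_def
  have hdM : (0 : ℝ) ≤ ((d * M : ℤ) : ℝ) := by positivity
  refine ⟨C, by positivity, ?_⟩
  intro m n hn
  -- the length-n factor-sum sequence
  set s : ℕ → ℤ := fun k => Pre ω (k + n) - Pre ω k with hs_def
  have hstep : ∀ k, |s (k + 1) - s k| ≤ d := by
    intro k
    have h1 : Pre ω (k + 1 + n) = Pre ω (k + n) + ω (k + n) := by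
      have : k + 1 + n = (k + n) + 1 := by omega
      rw [this, Pre, Pre, Finset.sum_range_succ]
    have h2 : Pre ω (k + 1) = Pre ω k + ω k := by
      rw [Pre, Pre, Finset.sum_range_succ]
    have e : s (k + 1) - s k = ω (k + n) - ω k := by
      simp only [hs_def, h1, h2]; ring
    rw [e]
    have := hK (k + n); have := hK k
    have := abs_sub (ω (k + n)) (ω k)
    omega
  obtain ⟨T, hTcard, hTmem⟩ := hM n hn
  have hsT : ∀ k, s k ∈ T := by
    intro k
    have hfac : Factor ω ((List.range n).map (fun i => ω (k + i))) := by
      refine ⟨k, ?_⟩; simp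
    have hlen : ((List.range n).map (fun i => ω (k + i))).length = n := by simp
    have := hTmem _ hfac hlen
    rwa [factor_sum] at this
  have hgap : ∀ a b : ℕ, |s b - s a| ≤ d * M := by
    have hTM : d * (T.card : ℤ) ≤ d * (M : ℤ) := by
      have : (T.card : ℤ) ≤ (M : ℤ) := Int.ofNat_le.mpr hTcard
      nlinarith
    have hstep' : ∀ k, |(fun k => -(s k)) (k + 1) - (fun k => -(s k)) k| ≤ d := by
      intro k
      have h := hstep k
      rw [abs_sub_comm] at h
      simpa [neg_add_eq_sub] using h
    have hT' : ∀ k, (fun k => -(s k)) k ∈ T.image (fun x => -x) :=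
      fun k => Finset.mem_image_of_mem _ (hsT k)
    have hTM' : d * ((T.image (fun x => -x)).card : ℤ) ≤ d * (M : ℤ) := by
      have hc := (Finset.card_image_le (s := T) (f := fun x : ℤ => -x)).trans hTcard
      have : ((T.image (fun x => -x)).card : ℤ) ≤ (M : ℤ) := Int.ofNat_le.mpr hc
      nlinarith
    intro a b
    rcases le_or_gt a b with h | h
    · have h1 := gap s d hd hstep T hsT a b h
      have h2 := gap (fun k => -(s k)) d hd hstep' (T.image (fun x => -x)) hT' a b h
      simp only [neg_sub_neg] at h2
      rw [abs_le]; omega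
    · have h1 := gap s d hd hstep T hsT b a h.le
      have h2 := gap (fun k => -(s k)) d hd hstep' (T.image (fun x => -x)) hT' b a h.le
      simp only [neg_sub_neg] at h2
      rw [abs_le]; omega
  -- telescoping
  have htel : ∀ k : ℕ, Pre ω (k * n) = ∑ j ∈ Finset.range k, s (j * n) := by
    intro k
    induction k with
    | zero => simp [Pre]
    | succ k ih =>
      rw [Finset.sum_range_succ, ← ih]
      have : (k + 1) * n = k * n + n := by ring
      rw [this]; simp [hs_def]
  have hbound : ∀ k : ℕ, (k : ℤ) * (s m - d * M) ≤ Pre ω (k * n) ∧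
      Pre ω (k * n) ≤ (k : ℤ) * (s m + d * M) := by
    intro k
    rw [htel k]
    constructor
    · calc (k : ℤ) * (s m - d * M) = ∑ _j ∈ Finset.range k, (s m - d * M) := by
            rw [Finset.sum_const, Finset.card_range]; ring
        _ ≤ ∑ j ∈ Finset.range k, s (j * n) := by
            apply Finset.sum_le_sum
            intro j _
            have := abs_le.mp (hgap m (j * n))
            omega
    · calc (∑ j ∈ Finset.range k, s (j * n)) ≤ ∑ _j ∈ Finset.range k, (s m + d * M) := by
            apply Finset.sum_le_sum
            intro j _
            have := abs_le.mp (hgap m (j * n))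
            omega
        _ = (k : ℤ) * (s m + d * M) := by rw [Finset.sum_const, Finset.card_range]; ring
  -- the subsequence k ↦ Pre(kn)/(kn) tends to L
  have hcomp : Filter.Tendsto (fun k : ℕ => ((Pre ω (k * n) : ℤ) : ℝ) / (k * n : ℕ))
      Filter.atTop (nhds L) := by
    have hmono : Filter.Tendsto (fun k : ℕ => k * n) Filter.atTop Filter.atTop := by
      apply Filter.tendsto_atTop_mono (f := fun k : ℕ => k) (g := fun k : ℕ => k * n)
      · intro k; exact Nat.le_mul_of_pos_right k hn
      · exact Filter.tendsto_id
    have := hs.comp hmono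
    refine this.congr ?_
    intro k
    simp only [Function.comp]
    rw [precast]
  have hnR : (0 : ℝ) < (n : ℝ) := by exact_mod_cast hn
  have hub : L ≤ (((s m : ℤ) : ℝ) + ((d * M : ℤ) : ℝ)) / (n : ℝ) := by
    apply le_of_tendsto hcomp
    filter_upwards [Filter.eventually_ge_atTop 1] with k hk
    have hkR : (0 : ℝ) < (k : ℝ) := by exact_mod_cast hk
    have h2 := (hbound k).2
    have h2R : ((Pre ω (k * n) : ℤ) : ℝ) ≤ (k : ℝ) * (((s m : ℤ) : ℝ) + ((d * M : ℤ) : ℝ)) := by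
      exact_mod_cast h2
    push_cast at h2R ⊢
    rw [div_le_div_iff₀ (by positivity) hnR]
    nlinarith [mul_le_mul_of_nonneg_right h2R hnR.le]
  have hlb : (((s m : ℤ) : ℝ) - ((d * M : ℤ) : ℝ)) / (n : ℝ) ≤ L := by
    apply ge_of_tendsto hcomp
    filter_upwards [Filter.eventually_ge_atTop 1] with k hk
    have hkR : (0 : ℝ) < (k : ℝ) := by exact_mod_cast hk
    have h2 := (hbound k).1
    have h2R : (k : ℝ) * (((s m : ℤ) : ℝ) - ((d * M : ℤ) : ℝ)) ≤ ((Pre ω (k * n) : ℤ) : ℝ) := by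
      exact_mod_cast h2
    push_cast at h2R ⊢
    rw [div_le_div_iff₀ hnR (by positivity)]
    nlinarith [mul_le_mul_of_nonneg_right h2R hnR.le]
  have hsm : ((Pre ω (m + n) - Pre ω m : ℤ) : ℝ) = ((s m : ℤ) : ℝ) := by
    simp [hs_def]
  rw [hsm, abs_le]
  rw [le_div_iff₀ hnR] at hub
  rw [div_le_iff₀ hnR] at hlb
  constructor
  · nlinarith
  · nlinarith

/-- For ω with bounded additive complexity, the slope is irrational iff for every
rational α only finitely many nonempty factors have slope α. -/
theorem stmt6 (ω : ℕ → ℤ) (hfin : (Set.range ω).Finite)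
    (hb : BoundedAddComplexity ω) (L : ℝ) (hs : HasSlope ω L) :
    Irrational L ↔
      ∀ α : ℚ, {B : List ℤ | Factor ω B ∧ B ≠ [] ∧ wordSlope B = α}.Finite := by
  obtain ⟨C, hC, hkey⟩ := key ω hfin hb L hs
  constructor
  · -- irrational ⇒ finitely many factors of each rational slope
    intro hirr α
    have hne : (α : ℝ) ≠ L := fun h => hirr ⟨α, h⟩
    have hpos : 0 < |(α : ℝ) - L| := by
      rw [abs_pos, sub_ne_zero]; exact hne
    obtain ⟨N, hN⟩ := exists_nat_ge (C / |(α : ℝ) - L|)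
    haveI : Finite ↥(Set.range ω) := hfin.to_subtype
    apply Set.Finite.subset
      (((List.finite_length_le ↥(Set.range ω) N).image (List.map Subtype.val)))
    rintro B ⟨⟨m, hm⟩, hBne, hslope⟩
    -- length bound
    have hlen0 : 0 < B.length := List.length_pos_iff.mpr hBne
    have hsumq : (B.sum : ℚ) = α * B.length := by
      rw [wordSlope, div_eq_iff (by exact_mod_cast hlen0.ne' : (B.length : ℚ) ≠ 0)] at hslope
      exact hslope
    have hBsum : B.sum = Pre ω (m + B.length) - Pre ω m := by
      conv_lhs => rw [hm]
      rw [factor_sum]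
    have hzR : ((Pre ω (m + B.length) - Pre ω m : ℤ) : ℝ) = (α : ℝ) * (B.length : ℝ) := by
      have hzq : ((Pre ω (m + B.length) - Pre ω m : ℤ) : ℚ) = α * B.length := by
        rw [← hBsum]; exact hsumq
      have h2 := congrArg (Rat.cast : ℚ → ℝ) hzq
      push_cast at h2 ⊢
      exact h2
    have hk := hkey m B.length hlen0
    rw [hzR] at hk
    have hfac : (α : ℝ) * (B.length : ℝ) - (B.length : ℝ) * L
        = (B.length : ℝ) * ((α : ℝ) - L) := by ring
    rw [hfac, abs_mul, Nat.abs_cast] at hk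
    have hlenN : (B.length : ℝ) ≤ N := by
      have h1 : (B.length : ℝ) ≤ C / |(α : ℝ) - L| := by
        rw [le_div_iff₀ hpos]; exact hk
      linarith
    have hlenN' : B.length ≤ N := by exact_mod_cast hlenN
    -- entries in the alphabet
    have hmem : ∀ x ∈ B, x ∈ Set.range ω := by
      intro x hx
      rw [hm] at hx
      simp only [List.mem_map, List.mem_range] at hx
      obtain ⟨i, _, hi⟩ := hx
      exact ⟨m + i, hi⟩
    refine ⟨B.pmap (fun x hx => ⟨x, hx⟩) hmem, ?_, ?_⟩
    · simp [List.length_pmap, hlenN']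
    · simp [List.map_pmap]
  · -- contrapositive: rational slope ⇒ infinitely many factors of slope L
    intro hall
    rw [Irrational]
    by_contra hcon
    obtain ⟨α, hα⟩ := hcon
    have hF := hall α
    -- bound on lengths of factors in the finite set
    obtain ⟨N, hN⟩ : ∃ N, ∀ B ∈ {B : List ℤ | Factor ω B ∧ B ≠ [] ∧ wordSlope B = α},
        B.length ≤ N := by
      obtain ⟨N, hN⟩ := (hF.image List.length).bddAbove
      exact ⟨N, fun B hB => hN ⟨B, hB, rfl⟩⟩
    set q : ℕ := α.den with hq_def
    have hq : 0 < q := α.pos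
    set p : ℤ := α.num with hp_def
    have hqα : (q : ℝ) * (α : ℝ) = (p : ℝ) := by
      rw [hq_def, hp_def, mul_comm]
      exact_mod_cast congrArg (Rat.cast : ℚ → ℝ) (Rat.mul_den_eq_num α)
    set V : ℕ → ℤ := fun k => Pre ω (k * q) - k * p with hV_def
    have hVbound : ∀ k : ℕ, 1 ≤ k → V k ∈ Finset.Icc (-⌈C⌉) ⌈C⌉ := by
      intro k hk
      have hkq : 1 ≤ k * q := Nat.one_le_iff_ne_zero.mpr (by positivity)
      have h := hkey 0 (k * q) hkq
      simp only [Nat.zero_add, zero_add] at h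
      have hPre0 : Pre ω 0 = 0 := by simp [Pre]
      rw [hPre0, sub_zero] at h
      have hcast : ((k * q : ℕ) : ℝ) * L = (k : ℝ) * ((q : ℝ) * L) := by push_cast; try ring
      have hchg : ((k * q : ℕ) : ℝ) * L = (k : ℝ) * (p : ℝ) := by
        rw [hcast, ← hα, hqα]
      rw [hchg] at h
      have hVR : ((V k : ℤ) : ℝ) = ((Pre ω (k * q) : ℤ) : ℝ) - (k : ℝ) * (p : ℝ) := by
        simp only [hV_def]; push_cast; try ring
      rw [← hVR] at h
      have h1 : ((V k : ℤ) : ℝ) ≤ (⌈C⌉ : ℝ) := le_trans (le_of_abs_le h) (Int.le_ceil C)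
      have h2 : -(⌈C⌉ : ℝ) ≤ ((V k : ℤ) : ℝ) := by
        have := neg_abs_le ((V k : ℤ) : ℝ)
        have h3 : -C ≤ ((V k : ℤ) : ℝ) := by
          have := abs_le.mp h; linarith [this.1]
        have h4 : -( ⌈C⌉ : ℝ) ≤ -C := by linarith [Int.le_ceil C]
        linarith
      rw [Finset.mem_Icc]
      constructor
      · exact_mod_cast h2
      · exact_mod_cast h1
    -- pigeonhole
    have : ∃ v : ℤ, {k : ℕ | V (k + 1) = v}.Infinite := by
      set f : ℕ → ↥(Finset.Icc (-⌈C⌉) ⌈C⌉) :=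
        fun k => ⟨V (k + 1), hVbound (k + 1) (Nat.le_add_left 1 k)⟩ with hf_def
      obtain ⟨b, hbinf⟩ := Finite.exists_infinite_fiber f
      refine ⟨(b : ℤ), ?_⟩
      have hsub : f ⁻¹' {b} ⊆ {k : ℕ | V (k + 1) = (b : ℤ)} := by
        intro k hk
        simp only [Set.mem_preimage, Set.mem_singleton_iff] at hk
        simpa [hf_def] using congrArg Subtype.val hk
      exact (Set.infinite_coe_iff.mp hbinf).mono hsub
    obtain ⟨v, hv⟩ := this
    obtain ⟨k0, hk0⟩ := hv.nonempty
    obtain ⟨k1, hk1S, hk1⟩ := hv.exists_gt (k0 + N)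
    -- build the long factor with slope α
    set m : ℕ := (k0 + 1) * q with hm_def
    set n : ℕ := (k1 - k0) * q with hn_def
    have hk01 : k0 < k1 := by omega
    have hn1 : 1 ≤ n := by
      have : 1 ≤ k1 - k0 := by omega
      calc 1 ≤ (k1 - k0) * 1 := by omega
        _ ≤ (k1 - k0) * q := Nat.mul_le_mul_left _ hq
    set B : List ℤ := (List.range n).map (fun i => ω (m + i)) with hB_def
    have hBlen : B.length = n := by simp [hB_def]
    have hBfac : Factor ω B := ⟨m, by rw [hBlen]⟩
    have hBne : B ≠ [] := by
      intro h
      rw [h] at hBlen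
      simp at hBlen
      omega
    have hmn : m + n = (k1 + 1) * q := by
      rw [hm_def, hn_def, ← Nat.add_mul]
      congr 1
      omega
    have hBsum : B.sum = (k1 - k0 : ℕ) * p := by
      rw [hB_def, factor_sum, hmn]
      have e1 : Pre ω ((k1 + 1) * q) = V (k1 + 1) + (k1 + 1 : ℕ) * p := by
        simp only [hV_def]; push_cast; try ring
      have e2 : Pre ω ((k0 + 1) * q) = V (k0 + 1) + (k0 + 1 : ℕ) * p := by
        simp only [hV_def]; push_cast; try ring
      rw [e1, e2, hk1S, hk0]
      push_cast [Nat.cast_sub hk01.le]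
      ring
    have hBslope : wordSlope B = α := by
      have hkk : ((k1 - k0 : ℕ) : ℚ) ≠ 0 := by
        have h0 : 0 < k1 - k0 := by omega
        exact_mod_cast h0.ne'
      rw [wordSlope, hBsum, hBlen, hn_def]
      have e1 : ((((k1 - k0 : ℕ) : ℤ) * p : ℤ) : ℚ) = ((k1 - k0 : ℕ) : ℚ) * (p : ℚ) := by
        push_cast; try ring
      have e2 : ((((k1 - k0) * q : ℕ)) : ℚ) = ((k1 - k0 : ℕ) : ℚ) * (q : ℚ) := by
        push_cast; try ring
      rw [e1, e2, mul_div_mul_left _ _ hkk]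
      exact_mod_cast Rat.num_div_den α
    have hBmem : B ∈ {B : List ℤ | Factor ω B ∧ B ≠ [] ∧ wordSlope B = α} :=
      ⟨hBfac, hBne, hBslope⟩
    have := hN B hBmem
    rw [hBlen, hn_def] at this
    have h5 : k1 - k0 ≤ (k1 - k0) * q := Nat.le_mul_of_pos_right _ hq
    omega
end

section
/- Let ω be a uniformly recurrent infinite word over a finite integer alphabet with bounded additive complexity, and suppose slope(ω) is rational. Then there exist a natural number L and a strictly increasing sequence of natural numbers n₀ < n₁ < n₂ < ⋯ with n_i − n_{i−1} ≤ L for all i ≥ 1 such that every consecutive block B_i = (ω(n_{i−1}), …, ω(n_i − 1)), i ≥ 1, is nonempty and has slope(B_i) = slope(ω). -/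
/-- The block of ω on positions `a, a+1, …, b-1`. -/
def seg (ω : ℕ → ℤ) (a b : ℕ) : List ℤ := (List.range (b - a)).map (fun j => ω (a + j))

/-- ω is uniformly recurrent: every factor of length n occurs in every factor of
some length K(n). -/
def UniformlyRecurrent (ω : ℕ → ℤ) : Prop :=
  ∀ n : ℕ, ∃ K : ℕ, ∀ B C : List ℤ, Factor ω B → B.length = n →
    Factor ω C → C.length = K → B <:+: C

namespace Stmt9Aux

def Sg (ω : ℕ → ℤ) (n : ℕ) : ℤ := ∑ i ∈ Finset.range n, ω i

lemma Sg_succ (ω : ℕ → ℤ) (n : ℕ) : Sg ω (n + 1) = Sg ω n + ω n :=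
  Finset.sum_range_succ ω n

lemma seg_eq (ω : ℕ → ℤ) (m n : ℕ) :
    seg ω m (m + n) = (List.range n).map (fun j => ω (m + j)) := by
  simp [seg]

lemma seg_length (ω : ℕ → ℤ) (m n : ℕ) : (seg ω m (m + n)).length = n := by
  simp [seg]

lemma seg_sum (ω : ℕ → ℤ) (m n : ℕ) :
    (seg ω m (m + n)).sum = Sg ω (m + n) - Sg ω m := by
  rw [seg_eq]
  have h : ((List.range n).map (fun j => ω (m + j))).sum
      = ∑ i ∈ Finset.range n, ω (m + i) := rfl
  rw [h, Sg, Sg, Finset.sum_range_add]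
  ring

lemma seg_factor (ω : ℕ → ℤ) (m n : ℕ) : Factor ω (seg ω m (m + n)) :=
  ⟨m, by rw [seg_length, seg_eq]⟩

/-- discrete intermediate value -/
lemma crossing (g : ℕ → ℤ) (D : ℤ) (hD : ∀ m, |g (m + 1) - g m| ≤ D)
    (a b : ℕ) (hab : a ≤ b) (c : ℤ) (hca : g a ≤ c) (hcb : c < g b) :
    ∃ m, a ≤ m ∧ m ≤ b ∧ c < g m ∧ g m ≤ c + D := by
  classical
  have hex : ∃ m, a ≤ m ∧ c < g m := ⟨b, hab, hcb⟩
  set m := Nat.find hex with hmdef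
  have hm := Nat.find_spec hex
  have hmb : m ≤ b := Nat.find_min' hex ⟨hab, hcb⟩
  have hma : a < m := by
    rcases lt_or_eq_of_le hm.1 with h | h
    · exact h
    · exact absurd hm.2 (by rw [← h]; exact not_lt.2 hca)
  have hprev : ¬(a ≤ m - 1 ∧ c < g (m - 1)) := Nat.find_min hex (by omega)
  have h2 : g (m - 1) ≤ c := by
    by_contra h
    exact hprev ⟨by omega, not_le.mp h⟩
  have h3 : g m - g (m - 1) ≤ D := by
    have := hD (m - 1)
    rw [show m - 1 + 1 = m by omega] at this
    exact (abs_le.mp this).2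
  exact ⟨m, le_of_lt hma, hmb, hm.2, by omega⟩

lemma diam_one (g : ℕ → ℤ) (D : ℤ) (hD0 : 1 ≤ D) (hD : ∀ m, |g (m + 1) - g m| ≤ D)
    (T : Finset ℤ) (hT : ∀ m, g m ∈ T) (a b : ℕ) (hab : a ≤ b) :
    g b - g a ≤ T.card * D := by
  classical
  by_contra h
  push_neg at h
  have hwit : ∀ k : ℕ, k ≤ T.card →
      ∃ m, a ≤ m ∧ m ≤ b ∧ g a + k * D < g m ∧ g m ≤ g a + k * D + D := by
    intro k hk
    apply crossing g D hD a b hab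
    · nlinarith [Int.ofNat_nonneg k]
    · have : (k : ℤ) * D ≤ (T.card : ℤ) * D := by
        have : (k : ℤ) ≤ (T.card : ℤ) := by exact_mod_cast hk
        nlinarith
      linarith
  set φ : ℕ → ℕ := fun k => if hk : k ≤ T.card then (hwit k hk).choose else 0 with hφ
  have hφs : ∀ k (hk : k ≤ T.card),
      g a + k * D < g (φ k) ∧ g (φ k) ≤ g a + k * D + D := by
    intro k hk
    simp only [hφ, dif_pos hk]
    exact ⟨((hwit k hk).choose_spec).2.2.1, ((hwit k hk).choose_spec).2.2.2⟩
  have hinj : Set.InjOn (fun k => g (φ k)) (Finset.range (T.card + 1)) := by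
    intro i hi j hj hij
    simp only [Finset.coe_range, Set.mem_Iio] at hi hj
    by_contra hne
    rcases Nat.lt_or_ge i j with hlt | hge
    · have h1 := hφs i (by omega)
      have h2 := hφs j (by omega)
      have : (i : ℤ) + 1 ≤ (j : ℤ) := by exact_mod_cast hlt
      simp only at hij
      nlinarith
    · have hlt : j < i := by omega
      have h1 := hφs i (by omega)
      have h2 := hφs j (by omega)
      have : (j : ℤ) + 1 ≤ (i : ℤ) := by exact_mod_cast hlt
      simp only at hij
      nlinarith
  have hcard := Finset.card_le_card_of_injOn (fun k => g (φ k))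
    (fun k _ => hT (φ k)) hinj
  rw [Finset.card_range] at hcard
  omega

lemma diam_abs (g : ℕ → ℤ) (D : ℤ) (hD0 : 1 ≤ D) (hD : ∀ m, |g (m + 1) - g m| ≤ D)
    (T : Finset ℤ) (hT : ∀ m, g m ∈ T) (a b : ℕ) :
    |g b - g a| ≤ T.card * D := by
  have hneg : ∀ a b : ℕ, a ≤ b → g a - g b ≤ T.card * D := by
    intro a b hab
    have hD' : ∀ m, |(fun i => -g i) (m + 1) - (fun i => -g i) m| ≤ D := by
      intro m
      have h1 : (fun i => -g i) (m+1) - (fun i => -g i) m = -(g (m+1) - g m) := by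
        simp only []; ring
      rw [h1, abs_neg]; exact hD m
    have hT' : ∀ m, (fun i => -g i) m ∈ T.image (fun x => -x) := fun m =>
      Finset.mem_image_of_mem _ (hT m)
    have := diam_one (fun i => -g i) D hD0 hD' (T.image (fun x => -x)) hT' a b hab
    rw [Finset.card_image_of_injective _ neg_injective] at this
    linarith
  rcases le_total a b with hab | hab
  · exact abs_le.mpr ⟨by linarith [hneg a b hab], diam_one g D hD0 hD T hT a b hab⟩
  · rw [abs_sub_comm]
    exact abs_le.mpr ⟨by linarith [hneg b a hab], diam_one g D hD0 hD T hT b a hab⟩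

end Stmt9Aux

namespace Stmt9Aux

/-- quasi-additivity from bounded additive complexity -/
lemma quasi (ω : ℕ → ℤ) (hfin : (Set.range ω).Finite) (hb : BoundedAddComplexity ω) :
    ∃ C : ℤ, 0 ≤ C ∧ ∀ n m : ℕ, 1 ≤ n → |(Sg ω (m + n) - Sg ω m) - Sg ω n| ≤ C := by
  classical
  obtain ⟨M, hM⟩ := hb
  have hne : (hfin.toFinset).Nonempty := ⟨ω 0, by simp⟩
  set D : ℤ := hfin.toFinset.max' hne - hfin.toFinset.min' hne + 1 with hDdef
  have hmem : ∀ i, ω i ∈ hfin.toFinset := fun i => by simp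
  have hD0 : 1 ≤ D := by
    have := hfin.toFinset.min'_le _ (hmem 0)
    have := hfin.toFinset.le_max' _ (hmem 0)
    omega
  have hDb : ∀ i j, |ω i - ω j| ≤ D := by
    intro i j
    have h1 := hfin.toFinset.le_max' _ (hmem i)
    have h2 := hfin.toFinset.min'_le _ (hmem j)
    have h3 := hfin.toFinset.le_max' _ (hmem j)
    have h4 := hfin.toFinset.min'_le _ (hmem i)
    rw [abs_le]; omega
  refine ⟨(M : ℤ) * D, by positivity, fun n m hn => ?_⟩
  obtain ⟨T, hTcard, hTmem⟩ := hM n hn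
  set g : ℕ → ℤ := fun m => Sg ω (m + n) - Sg ω m with hg
  have hstep : ∀ m, |g (m + 1) - g m| ≤ D := by
    intro m
    have h1 : g (m + 1) - g m = ω (m + n) - ω m := by
      simp only [hg]
      rw [show m + 1 + n = (m + n) + 1 by ring, Sg_succ, Sg_succ]
      ring
    rw [h1]; exact hDb _ _
  have hTm : ∀ m, g m ∈ T := by
    intro m
    have := hTmem (seg ω m (m + n)) (seg_factor ω m n) (seg_length ω m n)
    rwa [seg_sum] at this
  have h0 : g 0 = Sg ω n := by simp [hg, Sg]
  have := diam_abs g D hD0 hstep T hTm 0 m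
  rw [h0] at this
  have hcast : (T.card : ℤ) * D ≤ (M : ℤ) * D := by
    have : (T.card : ℤ) ≤ (M : ℤ) := by exact_mod_cast hTcard
    nlinarith
  calc |g m - Sg ω n| ≤ (T.card : ℤ) * D := by
        first
        | exact this
        | (rw [abs_sub_comm]; exact this)
    _ ≤ (M : ℤ) * D := hcast

/-- the partial sums stay within C of αn -/
lemma slope_bound (ω : ℕ → ℤ) (α : ℚ) (hs : HasSlope ω (α : ℝ)) (C : ℤ) (hC : 0 ≤ C)
    (hq : ∀ n m : ℕ, 1 ≤ n → |(Sg ω (m + n) - Sg ω m) - Sg ω n| ≤ C) :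
    ∀ n : ℕ, |(Sg ω n : ℚ) - α * n| ≤ (C : ℚ) := by
  intro n
  rcases Nat.eq_zero_or_pos n with rfl | hn
  · simp [Sg]; exact_mod_cast hC
  -- integer estimate: |Sg (k*n) - k * Sg n| ≤ k * C
  have key : ∀ k : ℕ, |Sg ω (k * n) - k * Sg ω n| ≤ k * C := by
    intro k
    induction k with
    | zero => simp [Sg]
    | succ k ih =>
      have h1 := hq n (k * n) hn
      have h2 : (k + 1) * n = k * n + n := by ring
      rw [h2]
      push_cast
      have : |Sg ω (k * n + n) - (k + 1 : ℤ) * Sg ω n| ≤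
          |(Sg ω (k * n + n) - Sg ω (k * n)) - Sg ω n| + |Sg ω (k * n) - k * Sg ω n| := by
        have : Sg ω (k * n + n) - (k + 1 : ℤ) * Sg ω n =
            ((Sg ω (k * n + n) - Sg ω (k * n)) - Sg ω n) + (Sg ω (k * n) - k * Sg ω n) := by
          ring
        rw [this]; exact abs_add_le _ _
      calc |Sg ω (k * n + n) - ((k : ℤ) + 1) * Sg ω n| ≤ _ := this
        _ ≤ C + k * C := add_le_add h1 ih
        _ = ((k : ℤ) + 1) * C := by ring
  -- pass to reals
  have hreal : |(Sg ω n : ℝ) - (α : ℝ) * n| ≤ (C : ℝ) := by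
    have hnR : (0 : ℝ) < (n : ℝ) := by exact_mod_cast hn
    have hmono : StrictMono (fun k : ℕ => k * n) := fun a b hab => by
      exact (Nat.mul_lt_mul_right hn).mpr hab
    have hsum : ∀ m : ℕ, ∑ i ∈ Finset.range m, (ω i : ℝ) = ((Sg ω m : ℤ) : ℝ) := by
      intro m; rw [Sg]; push_cast; ring
    have hcomp : Filter.Tendsto (fun k : ℕ => ((Sg ω (k * n) : ℤ) : ℝ) / ((k : ℝ) * n))
        Filter.atTop (nhds (α : ℝ)) := by
      have h := hs.comp hmono.tendsto_atTop
      rw [Function.comp_def] at h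
      simp only [hsum, Nat.cast_mul] at h
      exact h
    have habs : Filter.Tendsto
        (fun k : ℕ => |(Sg ω n : ℝ) / n - ((Sg ω (k * n) : ℤ) : ℝ) / ((k : ℝ) * n)|)
        Filter.atTop (nhds (|(Sg ω n : ℝ) / n - (α : ℝ)|)) :=
      ((tendsto_const_nhds.sub hcomp).abs)
    have hev : ∀ᶠ k : ℕ in Filter.atTop,
        |(Sg ω n : ℝ) / n - ((Sg ω (k * n) : ℤ) : ℝ) / ((k : ℝ) * n)| ≤ (C : ℝ) / n := by
      filter_upwards [Filter.eventually_ge_atTop 1] with k hk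
      have hkR : (0 : ℝ) < (k : ℝ) := by exact_mod_cast hk
      have hkeyR : |((Sg ω (k * n) : ℤ) : ℝ) - (k : ℝ) * ((Sg ω n : ℤ) : ℝ)| ≤ (k : ℝ) * C := by
        exact_mod_cast key k
      rw [abs_sub_comm]
      have e : ((Sg ω (k * n) : ℤ) : ℝ) / ((k : ℝ) * n) - (Sg ω n : ℝ) / n
          = (((Sg ω (k * n) : ℤ) : ℝ) - (k : ℝ) * (Sg ω n : ℝ)) / ((k : ℝ) * n) := by
        field_simp
      rw [e, abs_div, abs_of_pos (by positivity : (0 : ℝ) < (k : ℝ) * n)]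
      rw [div_le_div_iff₀ (by positivity) hnR]
      nlinarith [abs_nonneg (((Sg ω (k * n) : ℤ) : ℝ) - (k : ℝ) * (Sg ω n : ℝ))]
    have hfin2 := le_of_tendsto habs hev
    have e2 : (Sg ω n : ℝ) - (α : ℝ) * n = ((Sg ω n : ℝ) / n - (α : ℝ)) * n := by
      field_simp
    rw [e2, abs_mul, abs_of_pos hnR]
    calc |(Sg ω n : ℝ) / n - (α : ℝ)| * n ≤ ((C : ℝ) / n) * n := by
          apply mul_le_mul_of_nonneg_right hfin2 (le_of_lt hnR)
      _ = (C : ℝ) := by field_simp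
  -- back to ℚ
  have h3 : |((Sg ω n : ℚ) - α * n : ℚ)| ≤ ((C : ℚ) : ℚ) := by
    have : |(((Sg ω n : ℚ) - α * n : ℚ) : ℝ)| ≤ (((C:ℚ)):ℝ) := by push_cast; push_cast at hreal; convert hreal using 2 <;> ring
    rw [← Rat.cast_abs] at this
    exact_mod_cast this
  simpa using h3

end Stmt9Aux

namespace Stmt9Aux

lemma infix_entries (ω : ℕ → ℤ) (a K p ℓ : ℕ) (s t : List ℤ)
    (h : s ++ seg ω p (p + ℓ) ++ t = seg ω a (a + K)) :
    (∀ j, j < ℓ → ω (a + (s.length + j)) = ω (p + j)) ∧ s.length + ℓ ≤ K := by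
  have hlen : s.length + ℓ + t.length = K := by
    have hl := congrArg List.length h
    simp only [List.length_append, seg_length] at hl
    omega
  refine ⟨?_, by omega⟩
  intro j hj
  have hidx : s.length + j < K := by omega
  have hA : (s ++ (seg ω p (p + ℓ) ++ t))[s.length + j]? = some (ω (p + j)) := by
    rw [List.getElem?_append_right (by omega : s.length ≤ s.length + j)]
    rw [Nat.add_sub_cancel_left]
    rw [List.getElem?_append_left (by rw [seg_length]; omega)]
    rw [seg_eq]
    rw [List.getElem?_map, List.getElem?_range hj]
    rfl
  have hB : (seg ω a (a + K))[s.length + j]? = some (ω (a + (s.length + j))) := by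
    rw [seg_eq]
    rw [List.getElem?_map, List.getElem?_range hidx]
    rfl
  rw [← List.append_assoc, h, hB] at hA
  exact Option.some_inj.mp hA

lemma slope_eq (ω : ℕ → ℤ) (α : ℚ) (a b : ℕ) (hab : a < b)
    (hFeq : Sg ω b * (α.den : ℤ) - α.num * b = Sg ω a * (α.den : ℤ) - α.num * a) :
    wordSlope (seg ω a b) = α := by
  obtain ⟨ℓ, hℓ1, rfl⟩ : ∃ ℓ, 1 ≤ ℓ ∧ b = a + ℓ := ⟨b - a, by omega, by omega⟩
  have hint : (Sg ω (a + ℓ) - Sg ω a) * (α.den : ℤ) = α.num * ℓ := by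
    push_cast at hFeq ⊢
    linear_combination hFeq
  have hd0 : ((α.den : ℕ) : ℚ) ≠ 0 := Nat.cast_ne_zero.mpr α.den_ne_zero
  have hℓ0 : ((ℓ : ℕ) : ℚ) ≠ 0 := Nat.cast_ne_zero.mpr (by omega)
  rw [wordSlope, seg_sum, seg_length, div_eq_iff hℓ0]
  have hc : ((Sg ω (a + ℓ) - Sg ω a : ℤ) : ℚ) * ((α.den : ℕ) : ℚ)
      = (α.num : ℚ) * (ℓ : ℚ) := by exact_mod_cast hint
  have h2 : (α.num : ℚ) = α * (α.den : ℚ) := by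
    have h3 := Rat.num_div_den α
    rw [div_eq_iff hd0] at h3
    exact h3
  apply mul_right_cancel₀ hd0
  rw [hc, h2]; ring

end Stmt9Aux

open Stmt9Aux
 
/-- A uniformly recurrent word with bounded additive complexity and rational slope
factors into consecutive nonempty blocks of bounded length, all of slope equal to
the slope of ω. -/
theorem stmt9 (ω : ℕ → ℤ) (hfin : (Set.range ω).Finite)
    (hur : UniformlyRecurrent ω) (hb : BoundedAddComplexity ω)
    (α : ℚ) (hs : HasSlope ω (α : ℝ)) :
    ∃ (Lb : ℕ) (n : ℕ → ℕ), StrictMono n ∧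
      (∀ i : ℕ, n (i + 1) - n i ≤ Lb) ∧
      ∀ i : ℕ, wordSlope (seg ω (n i) (n (i + 1))) = α := by
  classical
  obtain ⟨C, hC0, hq⟩ := Stmt9Aux.quasi ω hfin hb
  have hSb := Stmt9Aux.slope_bound ω α hs C hC0 hq
  set d : ℤ := (α.den : ℤ) with hd
  have hd0 : 0 < d := by rw [hd]; exact_mod_cast α.pos
  set F : ℕ → ℤ := fun n => Sg ω n * d - α.num * n with hFdef
  have hFstep : ∀ n, F (n + 1) = F n + (ω n * d - α.num) := by
    intro n
    simp only [hFdef, Sg_succ]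
    push_cast
    ring
  have hαd : α * ((d : ℤ) : ℚ) = (α.num : ℚ) := by
    have h3 := Rat.num_div_den α
    rw [div_eq_iff (Nat.cast_ne_zero.mpr α.den_ne_zero)] at h3
    rw [hd]
    push_cast
    linear_combination -h3
  set Bd : ℤ := C * d with hBd
  have hFb : ∀ n, F n ∈ Finset.Icc (-Bd) Bd := by
    intro n
    have h := hSb n
    have he : (F n : ℚ) = ((Sg ω n : ℚ) - α * (n : ℚ)) * (d : ℚ) := by
      simp only [hFdef]
      push_cast
      rw [sub_mul]
      rw [mul_comm α ((n:ℚ))]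
      rw [mul_assoc, hαd]
      ring
    have habs : |(F n : ℚ)| ≤ (C : ℚ) * (d : ℚ) := by
      rw [he, abs_mul, abs_of_pos (by exact_mod_cast hd0 : (0:ℚ) < (d:ℚ))]
      apply mul_le_mul_of_nonneg_right h (by positivity)
    have : |F n| ≤ C * d := by exact_mod_cast habs
    rw [Finset.mem_Icc]
    rw [abs_le] at this
    omega
  set I : Finset ℤ := Finset.Icc (-Bd) Bd with hI
  set V : Finset ℤ := I.filter (fun v => ∀ N, ∃ n, N ≤ n ∧ F n = v) with hV
  obtain ⟨N₁, hN₁⟩ : ∃ N₁, ∀ n, N₁ ≤ n → F n ∈ V := by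
    have hφ : ∀ v : ℤ, ∃ N : ℕ,
        (¬ (∀ N', ∃ n, N' ≤ n ∧ F n = v)) → ∀ n, N ≤ n → F n ≠ v := by
      intro v
      by_cases h : ∀ N', ∃ n, N' ≤ n ∧ F n = v
      · exact ⟨0, fun hc => absurd h hc⟩
      · push_neg at h
        obtain ⟨N, hN⟩ := h
        exact ⟨N, fun _ n hn => hN n hn⟩
    choose φ hφs using hφ
    refine ⟨I.sup φ, fun n hn => ?_⟩
    by_contra hnv
    have hFI := hFb n
    have hnio : ¬ (∀ N', ∃ m, N' ≤ m ∧ F m = F n) := by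
      intro hio
      exact hnv (Finset.mem_filter.mpr ⟨hFI, hio⟩)
    exact hφs (F n) hnio n (le_trans (Finset.le_sup hFI) hn) rfl
  have hVne : V.Nonempty := ⟨F N₁, hN₁ N₁ le_rfl⟩
  set v : ℤ := V.min' hVne with hv
  set w : ℤ := V.max' hVne with hw
  have hv_io : ∀ N, ∃ n, N ≤ n ∧ F n = v :=
    (Finset.mem_filter.mp (V.min'_mem hVne)).2
  have hw_io : ∀ N, ∃ n, N ≤ n ∧ F n = w :=
    (Finset.mem_filter.mp (V.max'_mem hVne)).2
  have hvF : ∀ n, N₁ ≤ n → v ≤ F n ∧ F n ≤ w := fun n hn =>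
    ⟨V.min'_le _ (hN₁ n hn), V.le_max' _ (hN₁ n hn)⟩
  obtain ⟨p, hpN, hpw⟩ := hw_io N₁
  obtain ⟨q, hqp, hqv⟩ := hv_io (p + 1)
  obtain ⟨ℓ, hℓ1, rfl⟩ : ∃ ℓ, 1 ≤ ℓ ∧ q = p + ℓ := ⟨q - p, by omega, by omega⟩
  obtain ⟨K, hK⟩ := hur ℓ
  have hstep : ∀ m, N₁ ≤ m → ∃ r, m < r ∧ r ≤ m + (K + 1) ∧ F r = v := by
    intro m hm
    have hinf := hK (seg ω p (p + ℓ)) (seg ω (m + 1) (m + 1 + K))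
      (seg_factor ω p ℓ) (seg_length ω p ℓ)
      (seg_factor ω (m + 1) K) (seg_length ω (m + 1) K)
    obtain ⟨s, t, hst⟩ := hinf
    obtain ⟨heq, hsl⟩ := infix_entries ω (m + 1) K p ℓ s t hst
    set a' : ℕ := m + 1 + s.length with ha'
    have htrans : ∀ j, j ≤ ℓ → F (a' + j) - F a' = F (p + j) - F p := by
      intro j hj
      induction j with
      | zero => simp
      | succ j ih =>
        have hωeq : ω (a' + j) = ω (p + j) := by
          rw [ha', add_assoc]
          exact heq j (by omega)
        rw [show a' + (j + 1) = (a' + j) + 1 from rfl,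
            show p + (j + 1) = (p + j) + 1 from rfl, hFstep, hFstep, hωeq]
        have hih := ih (by omega)
        linarith
    have h1 := htrans ℓ le_rfl
    have h2 := hvF a' (by omega)
    have h3 := hvF (a' + ℓ) (by omega)
    have hFa'ℓ : F (a' + ℓ) = v := by
      rw [hqv, hpw] at h1
      linarith
    exact ⟨a' + ℓ, by omega, by omega, hFa'ℓ⟩
  have hstep2 : ∀ m, ∃ r, m < r ∧ r ≤ m + (K + 1) ∧ (N₁ ≤ m → F r = v) := by
    intro m
    by_cases hm : N₁ ≤ m
    · obtain ⟨r, h1, h2, h3⟩ := hstep m hm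
      exact ⟨r, h1, h2, fun _ => h3⟩
    · exact ⟨m + 1, by omega, by omega, fun h => absurd h hm⟩
  obtain ⟨r₀, hr₀N, hr₀v⟩ := hv_io N₁
  set nseq : ℕ → ℕ := fun i => Nat.rec r₀ (fun _ prev => (hstep2 prev).choose) i
    with hnseq
  have hnstep : ∀ i, nseq (i + 1) = (hstep2 (nseq i)).choose := fun i => rfl
  have hinv : ∀ i, N₁ ≤ nseq i ∧ F (nseq i) = v := by
    intro i
    induction i with
    | zero => exact ⟨hr₀N, hr₀v⟩
    | succ i ih =>
      obtain ⟨h1, h2, h3⟩ := (hstep2 (nseq i)).choose_spec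
      rw [hnstep]
      exact ⟨by omega, h3 ih.1⟩
  have hlt : ∀ i, nseq i < nseq (i + 1) := fun i => by
    rw [hnstep]; exact (hstep2 (nseq i)).choose_spec.1
  have hgap : ∀ i, nseq (i + 1) - nseq i ≤ K + 1 := fun i => by
    have := (hstep2 (nseq i)).choose_spec.2.1
    rw [hnstep]
    omega
  refine ⟨K + 1, nseq, strictMono_nat_of_lt_succ hlt, hgap, fun i => ?_⟩
  apply slope_eq ω α _ _ (hlt i)
  have hFa := (hinv i).2
  have hFb' := (hinv (i + 1)).2
  have : F (nseq (i+1)) = F (nseq i) := by rw [hFa, hFb']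
  simpa only [hFdef] using this
end
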